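/- arXiv:1702.06322 — 11 statements merged into one kernel-verified Lean document; each statement's English description precedes it below -/
import Mathlib

section
/- A signed graph G is balanced (every cycle has positive sign, where the sign of a cycle is the product of its edge signs) if and only if either all edges of G are positive, or the vertex set can be partitioned into two subsets such that every positive edge joins vertices in the same subset and every negative edge joins vertices in different subsets. -/
open SimpleGraph

/-- Sign of a walk in a signed graph. -/
private def wsgn {V : Type*} {G : SimpleGraph V} (σ : V → V → ℤ) {u v : V} (w : G.Walk u v) : ℤ :=
  (w.darts.map (fun d => σ d.toProd.1 d.toProd.2)).prod

section aux
variable {V : Type*} {G : SimpleGraph V} (σ : V → V → ℤ)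

private lemma wsgn_nil {u : V} : wsgn σ (Walk.nil : G.Walk u u) = 1 := rfl

private lemma wsgn_cons {u v w : V} (h : G.Adj u v) (p : G.Walk v w) :
    wsgn σ (Walk.cons h p) = σ u v * wsgn σ p := by
  simp [wsgn]

private lemma wsgn_append {u v w : V} (p : G.Walk u v) (q : G.Walk v w) :
    wsgn σ (p.append q) = wsgn σ p * wsgn σ q := by
  simp [wsgn]

private lemma wsgn_sq (hval : ∀ u v, G.Adj u v → σ u v = 1 ∨ σ u v = -1)
    {u v : V} (p : G.Walk u v) : wsgn σ p * wsgn σ p = 1 := by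
  induction p with
  | nil => simp [wsgn_nil]
  | @cons a x b h q ih =>
    rw [wsgn_cons]
    have hσ : σ a x * σ a x = 1 := by
      rcases hval _ _ h with h1 | h1 <;> rw [h1] <;> norm_num
    calc (σ a x * wsgn σ q) * (σ a x * wsgn σ q)
        = (σ a x * σ a x) * (wsgn σ q * wsgn σ q) := by ring
      _ = 1 := by rw [hσ, ih, mul_one]

private lemma wsgn_pm (hval : ∀ u v, G.Adj u v → σ u v = 1 ∨ σ u v = -1)
    {u v : V} (p : G.Walk u v) : wsgn σ p = 1 ∨ wsgn σ p = -1 :=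
  mul_self_eq_one_iff.mp (wsgn_sq σ hval p)

private lemma wsgn_reverse (hsymm : ∀ u v, σ u v = σ v u) {u v : V} (p : G.Walk u v) :
    wsgn σ p.reverse = wsgn σ p := by
  unfold wsgn
  rw [Walk.darts_reverse, List.map_reverse, List.prod_reverse, List.map_map]
  congr 1
  refine List.map_congr_left fun d _ => ?_
  exact hsymm _ _

private lemma wsgn_copy {u v u' v' : V} (p : G.Walk u v) (hu : u = u') (hv : v = v') :
    wsgn σ (p.copy hu hv) = wsgn σ p := by
  unfold wsgn
  rw [Walk.darts_copy]

/-- In a path from `u` to `v`, if the edge `s(u,v)` occurs, the path has length 1. -/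
private lemma path_edge_length {u v : V} (p : G.Walk u v) (hp : p.IsPath)
    (he : s(u, v) ∈ p.edges) : p.length = 1 := by
  induction p with
  | nil => simp at he
  | @cons a x b h q ih =>
    rw [Walk.edges_cons, List.mem_cons] at he
    rw [Walk.cons_isPath_iff] at hp
    rcases he with he | he
    · rw [Sym2.eq_iff] at he
      rcases he with ⟨-, rfl⟩ | ⟨rfl, rfl⟩
      · have : q = Walk.nil := Walk.isPath_iff_eq_nil.mp hp.1
        subst this; simp
      · exact absurd q.start_mem_support hp.2
    · exact absurd (q.fst_mem_support_of_mem_edges he) hp.2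

/-- Balance on cycles implies every closed walk has sign 1. -/
private lemma closed_wsgn (hsymm : ∀ u v, σ u v = σ v u)
    (hval : ∀ u v, G.Adj u v → σ u v = 1 ∨ σ u v = -1)
    (hbal : ∀ (v : V) (w : G.Walk v v), w.IsCycle → wsgn σ w = 1) :
    ∀ (n : ℕ) (v : V) (w : G.Walk v v), w.length = n → wsgn σ w = 1 := by
  classical
  intro n
  induction n using Nat.strong_induction_on with
  | _ n IH =>
    intro v w hw
    cases w with
    | nil => simp [wsgn_nil]
    | @cons _ u _ h p =>
      by_cases hnd : p.support.Nodup
      · have hp : p.IsPath := (Walk.isPath_def p).mpr hnd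
        by_cases he : s(v, u) ∈ p.edges
        · have he' : s(u, v) ∈ p.edges := by rwa [Sym2.eq_swap] at he
          have hl : p.length = 1 := path_edge_length p hp he'
          cases p with
          | nil => simp at hl
          | @cons _ y _ h2 q =>
            cases q with
            | nil =>
              rw [wsgn_cons, wsgn_cons, wsgn_nil]
              rcases hval _ _ h2 with h1 | h1 <;>
                rw [mul_one, hsymm v u, h1] <;> norm_num
            | cons h3 r => simp [Walk.length_cons] at hl
        · have hc : (Walk.cons h p).IsCycle := by
            rw [Walk.cons_isCycle_iff]
            exact ⟨hp, he⟩
          exact hbal _ _ hc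
      · obtain ⟨x, hx2⟩ : ∃ x, 2 ≤ p.support.count x := by
          by_contra hcon
          push_neg at hcon
          exact hnd (List.nodup_iff_count_le_one.mpr fun x => by have := hcon x; omega)
        have hxmem : x ∈ p.support := by
          rw [← List.count_pos_iff]
          omega
        have hspec := p.take_spec hxmem
        set q1 := p.takeUntil x hxmem with hq1
        set q2 := p.dropUntil x hxmem with hq2
        have hcount1 : q1.support.count x = 1 := p.count_support_takeUntil_eq_one hxmem
        have hcount : x ∈ q2.support.tail := by
          have hps : p.support = q1.support ++ q2.support.tail := by
            rw [← hspec, Walk.support_append]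
          rw [hps, List.count_append] at hx2
          rw [← List.count_pos_iff]
          omega
        cases hq2' : q2 with
        | nil =>
          rw [hq2'] at hcount; simp at hcount
        | @cons _ y _ h2 t =>
          rw [hq2'] at hcount
          simp only [Walk.support_cons, List.tail_cons] at hcount
          have htspec := t.take_spec hcount
          set tt := t.takeUntil x hcount with htt
          set d := t.dropUntil x hcount with hd
          set s : G.Walk x x := Walk.cons h2 tt with hs
          set w' : G.Walk v v := Walk.cons h (q1.append d) with hw'
          have hlp : p.length = q1.length + (1 + (tt.length + d.length)) := by
            calc p.length = (q1.append q2).length := by rw [hspec]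
              _ = q1.length + q2.length := Walk.length_append _ _
              _ = q1.length + (1 + (tt.length + d.length)) := by
                  rw [hq2', Walk.length_cons, ← Walk.length_append, htspec]; omega
          have hn : n = 1 + p.length := by rw [← hw, Walk.length_cons]; omega
          have hs_len : s.length = 1 + tt.length := by rw [hs, Walk.length_cons]; omega
          have hw'_len : w'.length = 1 + (q1.length + d.length) := by
            rw [hw', Walk.length_cons, Walk.length_append]; omega
          have ih_s : wsgn σ s = 1 := IH s.length (by omega) x s rfl
          have ih_w' : wsgn σ w' = 1 := IH w'.length (by omega) v w' rfl
          have e1 : wsgn σ (Walk.cons h p) =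
              σ v u * (wsgn σ q1 * (σ x y * (wsgn σ tt * wsgn σ d))) := by
            rw [wsgn_cons, ← hspec, wsgn_append, hq2', wsgn_cons, ← htspec, wsgn_append]
          have e2 : wsgn σ w' = σ v u * (wsgn σ q1 * wsgn σ d) := by
            rw [hw', wsgn_cons, wsgn_append]
          have e3 : wsgn σ s = σ x y * wsgn σ tt := by
            rw [hs, wsgn_cons]
          rw [e1]
          calc σ v u * (wsgn σ q1 * (σ x y * (wsgn σ tt * wsgn σ d)))
              = (σ v u * (wsgn σ q1 * wsgn σ d)) * (σ x y * wsgn σ tt) := by ring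
            _ = wsgn σ w' * wsgn σ s := by rw [e2, e3]
            _ = 1 := by rw [ih_s, ih_w', mul_one]

end aux

/-- A signed graph `(G, σ)` is balanced (every cycle has positive sign) iff either all
edges are positive, or the vertex set can be partitioned into two subsets such that
positive edges join vertices in the same subset and negative edges join vertices in
different subsets. -/
theorem stmt_0 {V : Type*} (G : SimpleGraph V) (σ : V → V → ℤ)
    (hsymm : ∀ u v, σ u v = σ v u)
    (hval : ∀ u v, G.Adj u v → σ u v = 1 ∨ σ u v = -1) :
    (∀ (v : V) (w : G.Walk v v), w.IsCycle →
        (w.darts.map (fun d => σ d.toProd.1 d.toProd.2)).prod = 1) ↔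
      ((∀ u v, G.Adj u v → σ u v = 1) ∨
        ∃ S : Set V, ∀ u v, G.Adj u v →
          (σ u v = 1 → (u ∈ S ↔ v ∈ S)) ∧ (σ u v = -1 → ¬(u ∈ S ↔ v ∈ S))) := by
  constructor
  · intro hbal
    have hclosed : ∀ (v : V) (w : G.Walk v v), wsgn σ w = 1 := fun v w =>
      closed_wsgn σ hsymm hval (fun v w hc => hbal v w hc) w.length v w rfl
    have hindep : ∀ {a b : V} (p q : G.Walk a b), wsgn σ p = wsgn σ q := by
      intro a b p q
      have h1 := hclosed a (p.append q.reverse)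
      rw [wsgn_append, wsgn_reverse σ hsymm] at h1
      have h2 := wsgn_sq σ hval q
      calc wsgn σ p = wsgn σ p * (wsgn σ q * wsgn σ q) := by rw [h2, mul_one]
        _ = (wsgn σ p * wsgn σ q) * wsgn σ q := by ring
        _ = wsgn σ q := by rw [h1, one_mul]
    right
    classical
    set base : V → V := fun v => (G.connectedComponentMk v).out with hbase
    have hreach : ∀ v : V, G.Reachable (base v) v := by
      intro v
      apply ConnectedComponent.exact
      show G.connectedComponentMk _ = G.connectedComponentMk v
      exact Quot.out_eq _
    refine ⟨{v | ∃ p : G.Walk (base v) v, wsgn σ p = 1}, fun u v huv => ?_⟩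
    have hbase_eq : base u = base v := by
      show (G.connectedComponentMk u).out = (G.connectedComponentMk v).out
      rw [ConnectedComponent.connectedComponentMk_eq_of_adj huv]
    obtain ⟨pu⟩ := hreach u
    have hu_iff : u ∈ {v | ∃ p : G.Walk (base v) v, wsgn σ p = 1} ↔ wsgn σ pu = 1 := by
      constructor
      · rintro ⟨p, hp⟩; exact (hindep pu p).trans hp
      · intro h; exact ⟨pu, h⟩
    set pv : G.Walk (base v) v :=
      (pu.copy hbase_eq rfl).append (Walk.cons huv Walk.nil) with hpvdef
    have hpv : wsgn σ pv = wsgn σ pu * σ u v := by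
      rw [hpvdef, wsgn_append, wsgn_cons, wsgn_nil, wsgn_copy, mul_one]
    have hv_iff : v ∈ {v | ∃ p : G.Walk (base v) v, wsgn σ p = 1} ↔
        wsgn σ pu * σ u v = 1 := by
      constructor
      · rintro ⟨p, hp⟩; rw [← hpv, hindep pv p]; exact hp
      · intro h2; exact ⟨pv, by rw [hpv]; exact h2⟩
    constructor
    · intro h1
      rw [hu_iff, hv_iff, h1, mul_one]
    · intro h1 hiff
      rw [hu_iff, hv_iff, h1] at hiff
      rcases wsgn_pm σ hval pu with h2 | h2 <;> rw [h2] at hiff <;> norm_num at hiff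
  · rintro (hpos | ⟨S, hS⟩)
    · intro v w _
      apply List.prod_eq_one
      intro x hx
      rw [List.mem_map] at hx
      obtain ⟨d, hd, rfl⟩ := hx
      exact hpos _ _ d.adj
    · intro v w _
      classical
      set f : V → ℤ := fun v => if v ∈ S then 1 else -1 with hf
      have hfval : ∀ u v, G.Adj u v → σ u v = f u * f v := by
        intro u v huv
        obtain ⟨h1, h2⟩ := hS u v huv
        rcases hval u v huv with h | h <;> rw [h, hf]
        · have := h1 h
          by_cases hu : u ∈ S <;> by_cases hv : v ∈ S <;> simp [hu, hv] at this ⊢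
        · have := h2 h
          by_cases hu : u ∈ S <;> by_cases hv : v ∈ S <;> simp [hu, hv] at this ⊢
      have key : ∀ {a b : V} (p : G.Walk a b), wsgn σ p = f a * f b := by
        intro a b p
        induction p with
        | nil => rw [wsgn_nil, hf]; simp only; split_ifs <;> norm_num
        | @cons a x b h q ih =>
          rw [wsgn_cons, ih, hfval a x h]
          have hxx : f x * f x = 1 := by rw [hf]; simp only; split_ifs <;> norm_num
          calc f a * f x * (f x * f b) = f a * f b * (f x * f x) := by ring
            _ = f a * f b := by rw [hxx, mul_one]
      show wsgn σ w = 1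
      rw [key w, hf]
      simp only
      split_ifs <;> norm_num
end

section
/- The determinant of the adjacency matrix of the path graph P_n is 1 if n ≡ 0 (mod 4), -1 if n ≡ 2 (mod 4), and 0 if n is odd. -/
def pM (n : ℕ) : Matrix (Fin n) (Fin n) ℤ :=
  Matrix.of fun i j : Fin n => if (i : ℕ) + 1 = j ∨ (j : ℕ) + 1 = i then 1 else 0

lemma pM_rec (n : ℕ) : (pM (n+2)).det = - (pM n).det := by
  rw [Matrix.det_succ_row_zero]
  rw [Finset.sum_eq_single (1 : Fin (n+2))]
  · have h1 : pM (n+2) 0 1 = 1 := by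
      simp [pM]
    rw [h1]
    rw [Matrix.det_succ_column_zero]
    rw [Finset.sum_eq_single (0 : Fin (n+1))]
    · have h2 : (pM (n+2)).submatrix Fin.succ (Fin.succAbove 1) 0 0 = 1 := by
        simp [pM, Fin.succAbove, Fin.lt_def]
      rw [h2]
      have h3 : ((pM (n+2)).submatrix Fin.succ (Fin.succAbove 1)).submatrix
          (Fin.succAbove 0) Fin.succ = pM n := by
        ext i j
        simp only [Matrix.submatrix_apply, pM, Matrix.of_apply]
        have hi : ((Fin.succ ((0 : Fin (n+1)).succAbove i)) : ℕ) = (i : ℕ) + 2 := by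
          simp [Fin.succAbove, Fin.lt_def]
        have hj : (((1 : Fin (n+2)).succAbove (Fin.succ j)) : ℕ) = (j : ℕ) + 2 := by
          simp [Fin.succAbove, Fin.lt_def]
        rw [hi, hj]
        congr 1
        simp only [eq_iff_iff]
        omega
      rw [h3]
      simp only [Fin.val_one, Fin.val_zero, pow_one, pow_zero, mul_one]
      ring
    · intro i _ hi
      have : (pM (n+2)).submatrix Fin.succ (Fin.succAbove 1) i 0 = 0 := by
        have hiv : (i : ℕ) ≠ 0 := by
          intro h; exact hi (Fin.ext (by simp [h]))
        simp only [Matrix.submatrix_apply, pM, Matrix.of_apply]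
        have h0 : (((1:Fin (n+2)).succAbove 0) : ℕ) = 0 := by
          simp [Fin.succAbove, Fin.lt_def]
        rw [if_neg]
        rw [h0]
        simp [Fin.val_succ]
        omega
      rw [this]; ring
    · intro h; simp at h
  · intro j _ hj
    have : pM (n+2) 0 j = 0 := by
      have : (j : ℕ) ≠ 1 := by simpa [Fin.ext_iff] using hj
      simp only [pM, Matrix.of_apply]
      rw [if_neg]
      simp [Fin.val_zero]
      omega
    rw [this]; ring
  · intro h; simp at h

lemma pM_val (n : ℕ) : (pM n).det = if n % 2 = 0 then (-1 : ℤ)^(n/2) else 0 := by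
  induction n using Nat.twoStepInduction with
  | zero => simp [pM, Matrix.det_fin_zero]
  | one => simp [pM, Matrix.det_fin_one]
  | more n ih _ =>
    rw [pM_rec, ih]
    rcases Nat.even_or_odd n with h | h
    · have h0 : n % 2 = 0 := Nat.even_iff.mp h
      have h2 : (n+2) % 2 = 0 := by omega
      have h3 : (n+2)/2 = n/2 + 1 := by omega
      simp [h0, h2, h3, pow_succ]
    · have h0 : n % 2 = 1 := Nat.odd_iff.mp h
      have h2 : (n+2) % 2 = 1 := by omega
      simp [h0, h2]

/-- Determinant of the adjacency matrix of the path graph `P_n`. -/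
theorem stmt_4 (n : ℕ) (A : Matrix (Fin n) (Fin n) ℤ)
    (hA : A = Matrix.of fun i j : Fin n =>
      if (i : ℕ) + 1 = j ∨ (j : ℕ) + 1 = i then 1 else 0) :
    (n % 4 = 0 → A.det = 1) ∧
    (n % 4 = 2 → A.det = -1) ∧
    (n % 2 = 1 → A.det = 0) := by
  have hA' : A = pM n := hA
  rw [hA', pM_val]
  refine ⟨?_, ?_, ?_⟩
  · intro h
    have h0 : n % 2 = 0 := by omega
    have h1 : (n/2) % 2 = 0 := by omega
    rw [if_pos h0]
    exact Even.neg_one_pow (Nat.even_iff.mpr h1)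
  · intro h
    have h0 : n % 2 = 0 := by omega
    have h1 : (n/2) % 2 = 1 := by omega
    rw [if_pos h0]
    exact Odd.neg_one_pow (Nat.odd_iff.mpr h1)
  · intro h
    rw [if_neg (by omega)]
end

section
/- The characteristic polynomial of the adjacency matrix of the signed complete graph K^{m,r}_{mr} equals (1-λ)^{m(r-1)} (1-2r-λ)^{m-1} (1 + r(m-2) - λ). -/
open Matrix

/-- Characteristic polynomial `φ(λ) = det(A - λI)` of the signed complete graph
`K^{m,r}_{mr}`: `m` negative cliques of order `r`, all other edges positive. -/
theorem stmt_9 (m r : ℕ) (hm : 1 ≤ m) (hr : 1 ≤ r)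
    (A : Matrix (Fin m × Fin r) (Fin m × Fin r) ℝ)
    (hA : A = Matrix.of fun p q =>
      if p.1 = q.1 then (if p.2 = q.2 then 0 else -1) else 1) :
    ∀ lam : ℝ, (A - lam • (1 : Matrix (Fin m × Fin r) (Fin m × Fin r) ℝ)).det =
      (1 - lam) ^ (m * (r - 1)) * (1 - 2 * r - lam) ^ (m - 1) *
        (1 + r * (m - 2) - lam) := by
  obtain ⟨m', rfl⟩ : ∃ m', m = m' + 1 := ⟨m - 1, (Nat.succ_pred_eq_of_pos hm).symm⟩
  obtain ⟨r', rfl⟩ : ∃ r', r = r' + 1 := ⟨r - 1, (Nat.succ_pred_eq_of_pos hr).symm⟩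
  have main : ∀ lam : ℝ, (1 : ℝ) - lam ≠ 0 → (1 : ℝ) - 2 * (r'+1) - lam ≠ 0 →
      (A - lam • (1 : Matrix (Fin (m'+1) × Fin (r'+1)) (Fin (m'+1) × Fin (r'+1)) ℝ)).det =
      (1 - lam) ^ ((m'+1) * ((r'+1) - 1)) * (1 - 2 * (r'+1) - lam) ^ ((m'+1) - 1) *
        (1 + (r'+1) * ((m'+1) - 2) - lam) := by
    intro lam hc hd
    set c : ℝ := 1 - lam with hc_def
    set d : ℝ := 1 - 2 * (r'+1) - lam with hd_def
    set Bblk : Matrix (Fin (r'+1)) (Fin (r'+1)) ℝ :=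
      Matrix.of (fun i j => if i = j then c - 2 else -2) with hB
    set D : Matrix (Fin (m'+1) × Fin (r'+1)) (Fin (m'+1) × Fin (r'+1)) ℝ :=
      Matrix.of (fun p q => if p.1 = q.1 then Bblk p.2 q.2 else 0) with hDdef
    have hsplit : A - lam • (1 : Matrix (Fin (m'+1) × Fin (r'+1)) (Fin (m'+1) × Fin (r'+1)) ℝ) =
        D + replicateCol Unit (fun _ => (1:ℝ)) * replicateRow Unit (fun _ => (1:ℝ)) := by
      rw [hA]
      ext p q
      simp only [hDdef, Matrix.sub_apply, Matrix.add_apply, Matrix.smul_apply,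
        Matrix.one_apply, Matrix.of_apply, Matrix.mul_apply, Finset.univ_unique,
        Finset.sum_singleton, replicateCol_apply, replicateRow_apply, smul_eq_mul, hB]
      by_cases h1 : p.1 = q.1
      · by_cases h2 : p.2 = q.2
        · have hpq : p = q := Prod.ext h1 h2
          simp [hpq, hc_def]; ring
        · have hpq : p ≠ q := fun h => h2 (by rw [h])
          simp [h1, h2, hpq]; ring
      · have hpq : p ≠ q := fun h => h1 (by rw [h])
        simp [h1, hpq]
    have hrowsum : ∀ p : Fin (m'+1) × Fin (r'+1),
        ∑ q : Fin (m'+1) × Fin (r'+1), (if p.1 = q.1 then Bblk p.2 q.2 else 0) = d := by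
      intro p
      rw [Fintype.sum_prod_type]
      have h1 : ∀ j : Fin (m'+1), ∑ k : Fin (r'+1), (if p.1 = j then Bblk p.2 k else 0)
          = if p.1 = j then d else 0 := by
        intro j
        by_cases h : p.1 = j
        · simp only [h, if_true]
          have hval : ∀ k, Bblk p.2 k = (if p.2 = k then c else 0) + (-2) := by
            intro k; simp only [hB, Matrix.of_apply]; split <;> ring
          simp_rw [hval]
          rw [Finset.sum_add_distrib, Finset.sum_ite_eq, Finset.sum_const]
          simp only [Finset.mem_univ, if_true, Finset.card_univ, Fintype.card_fin,
            nsmul_eq_mul]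
          rw [hd_def, hc_def]
          push_cast
          ring
        · simp [h]
      simp_rw [h1]
      rw [Finset.sum_ite_eq]
      simp
    have hDw : @HMul.hMul _ _ _ Matrix.instHMulOfFintypeOfMulOfAddCommMonoid D (replicateCol Unit (fun _ => d⁻¹)) = replicateCol Unit (fun _ => (1:ℝ)) := by
      ext p u
      simp only [Matrix.mul_apply, replicateCol_apply, hDdef, Matrix.of_apply]
      rw [← Finset.sum_mul, hrowsum p]
      field_simp
    have hfact : D + replicateCol Unit (fun _ => (1:ℝ)) * replicateRow Unit (fun _ => (1:ℝ)) =
        D * (1 + replicateCol Unit (fun _ => d⁻¹) * replicateRow Unit (fun _ => (1:ℝ))) := by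
      rw [Matrix.mul_add, Matrix.mul_one, ← Matrix.mul_assoc, hDw]
    have hblk : Bblk.det = c ^ r' * d := by
      have hBeq : Bblk = c • (1 + replicateCol Unit (fun _ => (1:ℝ)) * replicateRow Unit (fun _ => -2/c)) := by
        ext i j
        simp only [hB, Matrix.of_apply, Matrix.smul_apply, Matrix.add_apply,
          Matrix.one_apply, Matrix.mul_apply, Finset.univ_unique, Finset.sum_singleton,
          replicateCol_apply, replicateRow_apply, smul_eq_mul]
        by_cases h : i = j
        · rw [if_pos h, if_pos h]; field_simp; ring
        · rw [if_neg h, if_neg h]; field_simp; ring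
      rw [hBeq, Matrix.det_smul, Matrix.det_one_add_replicateCol_mul_replicateRow]
      simp only [dotProduct, Finset.sum_const, Finset.card_univ, Fintype.card_fin,
        nsmul_eq_mul]
      rw [hd_def, hc_def]
      have hc' : (1:ℝ) - lam ≠ 0 := hc
      field_simp
      push_cast
      ring
    have hdetD : D.det = (c ^ r' * d) ^ (m'+1) := by
      have hDeq : D = (Matrix.blockDiagonal (fun _ : Fin (m'+1) => Bblk)).submatrix
          (Equiv.prodComm (Fin (m'+1)) (Fin (r'+1))) (Equiv.prodComm (Fin (m'+1)) (Fin (r'+1))) := by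
        ext p q
        simp [hDdef, Matrix.blockDiagonal_apply, Matrix.submatrix_apply]
      rw [hDeq, Matrix.det_submatrix_equiv_self, Matrix.det_blockDiagonal, hblk]
      simp
    rw [hsplit, hfact, Matrix.det_mul, Matrix.det_one_add_replicateCol_mul_replicateRow, hdetD]
    have hdot : (fun _ : Fin (m'+1) × Fin (r'+1) => (1:ℝ)) ⬝ᵥ (fun _ => d⁻¹) = ((m'+1) * (r'+1) : ℝ) * d⁻¹ := by
      simp [dotProduct, Finset.card_univ, mul_comm]
    rw [hdot]
    simp only [Nat.add_sub_cancel]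
    rw [hd_def, hc_def] at *
    have hc' : (1:ℝ) - lam ≠ 0 := hc
    have hd' : (1:ℝ) - 2 * ((r':ℝ)+1) - lam ≠ 0 := hd
    field_simp
    rw [mul_pow, pow_succ (1 - 2 * ((r':ℝ)+1) - lam) m']
    ring
  have hcont1 : Continuous fun lam : ℝ =>
      (A - lam • (1 : Matrix (Fin (m'+1) × Fin (r'+1)) (Fin (m'+1) × Fin (r'+1)) ℝ)).det := by
    apply Continuous.matrix_det
    fun_prop
  have hcont2 : Continuous fun lam : ℝ =>
      (1 - lam) ^ ((m'+1) * ((r'+1) - 1)) * (1 - 2 * (r'+1) - lam) ^ ((m'+1) - 1) *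
        (1 + (r'+1) * ((m'+1) - 2) - lam) := by fun_prop
  have hdense : Dense (({(1:ℝ), 1 - 2*((r':ℝ)+1)} : Set ℝ)ᶜ) :=
    Set.Countable.dense_compl ℝ ((Set.finite_singleton _).insert _).countable
  have heq := hcont1.ext_on hdense hcont2 ?_
  · intro lam
    have := congrFun heq lam
    push_cast at this ⊢
    convert this using 2
  · intro lam hlam
    simp only [Set.mem_compl_iff, Set.mem_insert_iff, Set.mem_singleton_iff, not_or] at hlam
    exact main lam (sub_ne_zero.mpr fun h => hlam.1 h.symm)
      (fun h => hlam.2 (by linarith [sub_eq_zero.mp ((by ring_nf; ring_nf at h; exact h : (1 - 2*((r':ℝ)+1)) - lam = 0))]))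
end

section
/- The determinant of the adjacency matrix of K^{m,r}_{mr} equals (1-2r)^{m-1} (1 + r(m-2)). -/
open Matrix

/-- Determinant of the adjacency matrix of `K^{m,r}_{mr}`. -/
theorem stmt_10 (m r : ℕ) (hm : 1 ≤ m) (hr : 1 ≤ r)
    (A : Matrix (Fin m × Fin r) (Fin m × Fin r) ℤ)
    (hA : A = Matrix.of fun p q =>
      if p.1 = q.1 then (if p.2 = q.2 then 0 else -1) else 1) :
    A.det = (1 - 2 * (r : ℤ)) ^ (m - 1) * (1 + (r : ℤ) * ((m : ℤ) - 2)) := by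
  -- work over ℚ
  set c : ℚ := 1 - 2 * r with hc_def
  have hc : c ≠ 0 := by
    have : (1 : ℚ) ≤ r := by exact_mod_cast hr
    simp only [hc_def]; nlinarith
  -- the block-diagonal matrix C with blocks I - 2J
  set C : Matrix (Fin m × Fin r) (Fin m × Fin r) ℚ := Matrix.of fun p q =>
    if p.1 = q.1 then (if p.2 = q.2 then (-1 : ℚ) else -2) else 0 with hC_def
  -- a single block
  set K : Matrix (Fin r) (Fin r) ℚ :=
    1 + Matrix.replicateCol Unit (fun _ => (1 : ℚ)) * Matrix.replicateRow Unit (fun _ => (-2 : ℚ)) with hK_def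
  have hKdet : K.det = c := by
    rw [hK_def, Matrix.det_one_add_replicateCol_mul_replicateRow]
    simp [dotProduct, hc_def, mul_comm]
    ring
  have hCeq : C = (Matrix.blockDiagonal (fun _ : Fin m => K)).submatrix
      (Equiv.prodComm (Fin m) (Fin r)) (Equiv.prodComm (Fin m) (Fin r)) := by
    ext p q
    simp only [hC_def, hK_def, Matrix.submatrix_apply, Equiv.prodComm_apply,
      Matrix.blockDiagonal_apply, Prod.swap_prod_mk, Matrix.of_apply,
      Matrix.add_apply, Matrix.one_apply, Matrix.mul_apply, Matrix.replicateCol_apply,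
      Matrix.replicateRow_apply, Finset.sum_const, Finset.card_univ, Fintype.card_unit]
    by_cases h1 : p.1 = q.1 <;> by_cases h2 : p.2 = q.2 <;> simp [h1, h2] <;> norm_num
  have hCdet : C.det = c ^ m := by
    rw [hCeq, Matrix.det_submatrix_equiv_self, Matrix.det_blockDiagonal]
    simp [hKdet]
  have hCunit : IsUnit C.det := by
    rw [hCdet]; exact (isUnit_iff_ne_zero.2 (pow_ne_zero _ hc))
  -- A over ℚ
  set Aq : Matrix (Fin m × Fin r) (Fin m × Fin r) ℚ := A.map (Int.cast : ℤ → ℚ) with hAq_def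
  have hAqeq : Aq = C + Matrix.replicateCol Unit (fun _ => (1 : ℚ)) * Matrix.replicateRow Unit (fun _ => (1 : ℚ)) := by
    ext p q
    simp only [hAq_def, hA, hC_def, Matrix.map_apply, Matrix.of_apply, Matrix.add_apply,
      Matrix.mul_apply, Matrix.replicateCol_apply, Matrix.replicateRow_apply, Finset.sum_const,
      Finset.card_univ, Fintype.card_unit]
    by_cases h1 : p.1 = q.1 <;> by_cases h2 : p.2 = q.2 <;> simp [h1, h2] <;> norm_num
  -- C⁻¹ applied to the all-ones column
  have hmul : C * (c⁻¹ • Matrix.replicateCol Unit (fun _ : Fin m × Fin r => (1 : ℚ))) = Matrix.replicateCol Unit (fun _ : Fin m × Fin r => (1:ℚ)) := by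
    ext p u
    simp only [Matrix.mul_apply, Matrix.smul_apply, Matrix.replicateCol_apply, smul_eq_mul, mul_one,
      ← Finset.sum_mul, hC_def, Matrix.of_apply]
    have hsum : ∑ q : Fin m × Fin r,
        (if p.1 = q.1 then (if p.2 = q.2 then (-1 : ℚ) else -2) else 0) = c := by
      rw [Fintype.sum_prod_type]
      rw [Finset.sum_eq_single p.1]
      · have h2 : ∑ j : Fin r, (if p.2 = j then (-1 : ℚ) else -2)
            = ∑ j : Fin r, ((-2 : ℚ) + if p.2 = j then 1 else 0) := by
          apply Finset.sum_congr rfl; intro j _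
          by_cases h : p.2 = j <;> simp [h] <;> norm_num
        simp only [eq_self_iff_true, if_true]
        rw [h2, Finset.sum_add_distrib]
        simp [hc_def, Finset.sum_ite_eq]
        ring
      · intro b _ hb
        have : p.1 ≠ b := fun h => hb h.symm
        simp [this]
      · simp
    rw [hsum]
    field_simp
  have hinv : C⁻¹ * Matrix.replicateCol Unit (fun _ : Fin m × Fin r => (1 : ℚ))
      = c⁻¹ • Matrix.replicateCol Unit (fun _ : Fin m × Fin r => (1 : ℚ)) := by
    conv_lhs => rw [← hmul]
    exact Matrix.nonsing_inv_mul_cancel_left _ _ hCunit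
  -- matrix determinant lemma
  have hdetAq : Aq.det = c ^ m * (1 + c⁻¹ * (m * r)) := by
    rw [hAqeq, Matrix.det_add_replicateCol_mul_replicateRow hCunit, hCdet, Matrix.mul_assoc, hinv,
      Matrix.mul_smul]
    rw [Matrix.det_unique]
    simp only [Matrix.add_apply, Matrix.one_apply_eq, Matrix.smul_apply,
      Matrix.replicateRow_mul_replicateCol_apply, smul_eq_mul]
    have : dotProduct (fun _ : Fin m × Fin r => (1:ℚ)) (fun _ => (1:ℚ))
        = (m : ℚ) * r := by
      simp [dotProduct, Finset.card_univ, Fintype.card_prod]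
    rw [this]
  -- put it together over ℚ
  have key : Aq.det = (c ^ (m - 1)) * (1 + (r : ℚ) * ((m : ℚ) - 2)) := by
    have hpow : c ^ m = c ^ (m - 1) * c := by
      rw [← pow_succ]; congr 1; omega
    rw [hdetAq, hpow, mul_assoc]
    congr 1
    field_simp
    simp only [hc_def]; ring
  -- cast back to ℤ
  have hmap : ((A.det : ℤ) : ℚ) = Aq.det := by
    rw [hAq_def]
    rw [show ((A.det : ℤ) : ℚ) = (Int.castRingHom ℚ) A.det from rfl,
      RingHom.map_det, RingHom.mapMatrix_apply]
    rfl
  have final : ((A.det : ℤ) : ℚ)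
      = (((1 - 2 * (r : ℤ)) ^ (m - 1) * (1 + (r : ℤ) * ((m : ℤ) - 2)) : ℤ) : ℚ) := by
    rw [hmap, key]
    push_cast [hc_def]
    ring
  exact_mod_cast final
end

section
/- The eigenvalues of the adjacency matrix of K^{m,r}_{mr} are 1 with multiplicity m(r-1), 1-2r with multiplicity m-1, and 1 + r(m-2) with multiplicity 1. -/
open Matrix Polynomial

noncomputable def Qmat (n : ℕ) : Matrix (Fin (n+1)) (Fin (n+1)) ℝ :=
  Matrix.of fun i j => if j = 0 then 1 else (if i = 0 then 1 else 0) - (if i = j then 1 else 0)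

noncomputable def Rmat (n : ℕ) : Matrix (Fin (n+1)) (Fin (n+1)) ℝ :=
  Matrix.of fun i j => ((n : ℝ)+1)⁻¹ - (if i ≠ 0 ∧ i = j then 1 else 0)

lemma sum_Qmat (n : ℕ) (k : Fin (n+1)) :
    ∑ a, Qmat n a k = if k = 0 then ((n : ℝ)+1) else 0 := by
  by_cases h : k = 0 <;>
    simp [Qmat, h, Finset.sum_sub_distrib, Finset.sum_ite_eq']

lemma sum_Rmat (n : ℕ) (i : Fin (n+1)) :
    ∑ a, Rmat n i a = if i = 0 then 1 else 0 := by
  have hn : ((n:ℝ)+1) ≠ 0 := by positivity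
  by_cases h : i = 0 <;>
    simp [Rmat, h, Finset.sum_sub_distrib, Finset.sum_ite_eq, Finset.mul_sum, hn,
      mul_inv_cancel₀]

lemma RQ (n : ℕ) (i k : Fin (n+1)) :
    ∑ a, Rmat n i a * Qmat n a k = if i = k then 1 else 0 := by
  have hn : ((n:ℝ)+1) ≠ 0 := by positivity
  by_cases h : k = 0
  · subst h
    have h2 : ∀ a : Fin (n+1), Rmat n i a * Qmat n a 0 = Rmat n i a := by
      intro a; simp [Qmat]
    rw [Finset.sum_congr rfl fun a _ => h2 a, sum_Rmat]
  · have : ∀ a : Fin (n+1), Rmat n i a * Qmat n a k =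
        Rmat n i a * (if a = 0 then 1 else 0) - Rmat n i a * (if a = k then 1 else 0) := by
      intro a; simp [Qmat, h, mul_sub]
    rw [Finset.sum_congr rfl fun a _ => this a, Finset.sum_sub_distrib]
    simp only [mul_ite, mul_one, mul_zero, Finset.sum_ite_eq', Finset.mem_univ, if_true]
    by_cases hik : i = k
    · subst hik
      simp [Rmat, h, hn]
    · simp [Rmat, h, hik]

noncomputable def Jmat (n : ℕ) : Matrix (Fin (n+1)) (Fin (n+1)) ℝ := Matrix.of fun _ _ => 1

noncomputable def Emat (n : ℕ) : Matrix (Fin (n+1)) (Fin (n+1)) ℝ :=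
  Matrix.of fun i j => if i = 0 ∧ j = 0 then ((n : ℝ)+1) else 0

lemma RQ_mat (n : ℕ) : Rmat n * Qmat n = 1 := by
  ext i k
  rw [Matrix.mul_apply, RQ]
  simp [Matrix.one_apply]

lemma RJQ_mat (n : ℕ) : Rmat n * Jmat n * Qmat n = Emat n := by
  have h1 : Rmat n * Jmat n = Matrix.of fun i _ => if i = 0 then (1:ℝ) else 0 := by
    ext i c
    rw [Matrix.mul_apply]
    simp only [Jmat, Matrix.of_apply, mul_one]
    exact sum_Rmat n i
  ext i k
  rw [Matrix.mul_apply, h1]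
  simp only [Matrix.of_apply, Emat, ite_mul, one_mul, zero_mul]
  by_cases hi : i = 0
  · simp [hi, sum_Qmat]
  · simp [hi]

/-- Kronecker-style product multiplication. -/
lemma kron_mul {m r : ℕ} (A1 B1 : Matrix (Fin m) (Fin m) ℝ) (A2 B2 : Matrix (Fin r) (Fin r) ℝ) :
    (Matrix.of fun p q : Fin m × Fin r => A1 p.1 q.1 * A2 p.2 q.2) *
      (Matrix.of fun p q : Fin m × Fin r => B1 p.1 q.1 * B2 p.2 q.2) =
      Matrix.of fun p q : Fin m × Fin r => (A1 * B1) p.1 q.1 * (A2 * B2) p.2 q.2 := by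
  ext p q
  rw [Matrix.mul_apply]
  simp only [Matrix.of_apply, Matrix.mul_apply]
  rw [Fintype.sum_prod_type, Finset.sum_mul_sum]
  exact Finset.sum_congr rfl fun a _ => Finset.sum_congr rfl fun b _ => by ring

lemma charpoly_similar {n : Type*} [Fintype n] [DecidableEq n]
    (A P Pi : Matrix n n ℝ) (h : Pi * P = 1) : (Pi * A * P).charpoly = A.charpoly := by
  have hc : charmatrix (Pi * A * P) =
      (C : ℝ →+* ℝ[X]).mapMatrix Pi * charmatrix A * (C : ℝ →+* ℝ[X]).mapMatrix P := by
    simp only [charmatrix, Matrix.mul_sub, Matrix.sub_mul, RingHom.map_mul]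
    congr 1
    rw [Matrix.scalar_apply, ← Matrix.smul_one_eq_diagonal, Matrix.mul_smul, Matrix.smul_mul, Matrix.mul_one,
      show (C : ℝ →+* ℝ[X]).mapMatrix Pi * (C : ℝ →+* ℝ[X]).mapMatrix P
        = (C : ℝ →+* ℝ[X]).mapMatrix (Pi * P) from (_root_.map_mul _ _ _).symm, h,
      _root_.map_one]
  have hd : ((C : ℝ →+* ℝ[X]).mapMatrix Pi).det * ((C : ℝ →+* ℝ[X]).mapMatrix P).det = 1 := by
    rw [← Matrix.det_mul,
      show (C : ℝ →+* ℝ[X]).mapMatrix Pi * (C : ℝ →+* ℝ[X]).mapMatrix P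
        = (C : ℝ →+* ℝ[X]).mapMatrix (Pi * P) from (_root_.map_mul _ _ _).symm, h,
      _root_.map_one, Matrix.det_one]
  unfold Matrix.charpoly
  rw [hc, Matrix.det_mul, Matrix.det_mul]
  linear_combination (charmatrix A).det * hd

lemma charpoly_diag {n : Type*} [Fintype n] [DecidableEq n] (d : n → ℝ) :
    (Matrix.diagonal d).charpoly = ∏ i, (X - C (d i)) := by
  unfold Matrix.charpoly
  have h : charmatrix (Matrix.diagonal d) = Matrix.diagonal (fun i => X - C (d i)) := by
    ext i j
    by_cases hij : i = j
    · subst hij; simp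
    · simp [hij, Matrix.diagonal_apply_ne _ hij]
  rw [h, Matrix.det_diagonal]

lemma roots_prod_diag {n : Type*} [Fintype n] [DecidableEq n] (d : n → ℝ) :
    (∏ i, (X - C (d i))).roots = Finset.univ.val.map d := by
  have h : ∏ i, (X - C (d i)) = ((Finset.univ.val.map d).map fun a => X - C a).prod := by
    rw [Multiset.map_map]; rfl
  rw [h, Polynomial.roots_multiset_prod_X_sub_C]

def eqvSnd {α β : Type*} (qb : β → Prop) : {p : α × β // qb p.2} ≃ α × {b // qb b} :=
  ⟨fun x => (x.1.1, ⟨x.1.2, x.2⟩), fun y => ⟨(y.1, y.2.1), y.2.2⟩, fun _ => rfl, fun _ => rfl⟩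

def eqvBoth {α β : Type*} (qa : α → Prop) (qb : β → Prop) :
    {p : α × β // qa p.1 ∧ qb p.2} ≃ {a // qa a} × {b // qb b} :=
  ⟨fun x => (⟨x.1.1, x.2.1⟩, ⟨x.1.2, x.2.2⟩), fun y => ⟨(y.1.1, y.2.1), ⟨y.1.2, y.2.2⟩⟩,
    fun _ => rfl, fun _ => rfl⟩

lemma map_univ_split (M R : ℕ) (d : Fin (M+1) × Fin (R+1) → ℝ) (c1 c2 c3 : ℝ)
    (h1 : ∀ p : Fin (M+1) × Fin (R+1), p.2 ≠ 0 → d p = c1)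
    (h2 : ∀ p : Fin (M+1) × Fin (R+1), p.2 = 0 → p.1 ≠ 0 → d p = c2)
    (h3 : ∀ p : Fin (M+1) × Fin (R+1), p.2 = 0 → p.1 = 0 → d p = c3) :
    (Finset.univ.val.map d : Multiset ℝ) =
      Multiset.replicate ((M+1) * R) c1 + Multiset.replicate M c2 +
        Multiset.replicate 1 c3 := by
  classical
  set s : Multiset (Fin (M+1) × Fin (R+1)) := Finset.univ.val with hs
  have hsplit : s = s.filter (fun p => p.2 ≠ 0) +
      ((s.filter (fun p => ¬ p.2 ≠ 0)).filter (fun p => p.1 ≠ 0) +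
       (s.filter (fun p => ¬ p.2 ≠ 0)).filter (fun p => ¬ p.1 ≠ 0)) := by
    rw [Multiset.filter_add_not, Multiset.filter_add_not]
  have cardfact : ∀ (q : Fin (M+1) × Fin (R+1) → Prop) [DecidablePred q],
      (s.filter q).card = Fintype.card {p : Fin (M+1) × Fin (R+1) // q p} := by
    intro q _
    rw [hs, ← Finset.filter_val, ← Finset.card_def, Fintype.card_subtype]
  have card1 : (s.filter (fun p => p.2 ≠ 0)).card = (M+1) * R := by
    rw [cardfact]
    rw [Fintype.card_congr (eqvSnd (fun b : Fin (R+1) => b ≠ 0))]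
    have hR : Fintype.card {b : Fin (R+1) // b ≠ 0} = R := by
      simp [Fintype.card_subtype_compl, Fintype.card_subtype_eq]
    simp [hR]
  have card2 : ((s.filter (fun p => ¬ p.2 ≠ 0)).filter (fun p => p.1 ≠ 0)).card = M := by
    rw [Multiset.filter_filter, cardfact]
    rw [Fintype.card_congr (eqvBoth (fun a : Fin (M+1) => a ≠ 0) (fun b : Fin (R+1) => ¬ b ≠ 0))]
    have : Fintype.card {b : Fin (R+1) // ¬ b ≠ 0} = 1 := by
      rw [Fintype.card_congr (Equiv.subtypeEquivRight (fun b => not_ne_iff))]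
      exact Fintype.card_subtype_eq (0 : Fin (R+1))
    have hM : Fintype.card {a : Fin (M+1) // a ≠ 0} = M := by
      simp [Fintype.card_subtype_compl, Fintype.card_subtype_eq]
    simp [this, hM]
  have card3 : ((s.filter (fun p => ¬ p.2 ≠ 0)).filter (fun p => ¬ p.1 ≠ 0)).card = 1 := by
    rw [Multiset.filter_filter, cardfact]
    rw [Fintype.card_congr (eqvBoth (fun a : Fin (M+1) => ¬ a ≠ 0) (fun b : Fin (R+1) => ¬ b ≠ 0))]
    have e1 : Fintype.card {b : Fin (R+1) // ¬ b ≠ 0} = 1 := by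
      rw [Fintype.card_congr (Equiv.subtypeEquivRight (fun b => not_ne_iff))]
      exact Fintype.card_subtype_eq (0 : Fin (R+1))
    have e2 : Fintype.card {a : Fin (M+1) // ¬ a ≠ 0} = 1 := by
      rw [Fintype.card_congr (Equiv.subtypeEquivRight (fun a => not_ne_iff))]
      exact Fintype.card_subtype_eq (0 : Fin (M+1))
    simp [e1, e2]
  calc (s.map d : Multiset ℝ)
      = (s.filter (fun p => p.2 ≠ 0)).map d +
        (((s.filter (fun p => ¬ p.2 ≠ 0)).filter (fun p => p.1 ≠ 0)).map d +
         ((s.filter (fun p => ¬ p.2 ≠ 0)).filter (fun p => ¬ p.1 ≠ 0)).map d) := by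
        conv_lhs => rw [hsplit]
        rw [Multiset.map_add, Multiset.map_add]
    _ = Multiset.replicate ((M+1) * R) c1 + Multiset.replicate M c2 +
        Multiset.replicate 1 c3 := by
        rw [add_assoc]
        congr 1
        · refine Multiset.eq_replicate.2 ⟨by rw [Multiset.card_map, card1], ?_⟩
          intro b hb
          obtain ⟨p, hp, rfl⟩ := Multiset.mem_map.1 hb
          have hq : p.2 ≠ 0 := (Multiset.mem_filter.1 hp).2
          exact h1 p hq
        congr 1
        · refine Multiset.eq_replicate.2 ⟨by rw [Multiset.card_map, card2], ?_⟩
          intro b hb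
          obtain ⟨p, hp, rfl⟩ := Multiset.mem_map.1 hb
          have hq : p.1 ≠ 0 := (Multiset.mem_filter.1 hp).2
          have hq2 : ¬ p.2 ≠ 0 := (Multiset.mem_filter.1 (Multiset.mem_of_mem_filter hp)).2
          exact h2 p (not_ne_iff.1 hq2) hq
        · refine Multiset.eq_replicate.2 ⟨by rw [Multiset.card_map, card3], ?_⟩
          intro b hb
          obtain ⟨p, hp, rfl⟩ := Multiset.mem_map.1 hb
          have hq : ¬ p.1 ≠ 0 := (Multiset.mem_filter.1 hp).2
          have hq2 : ¬ p.2 ≠ 0 := (Multiset.mem_filter.1 (Multiset.mem_of_mem_filter hp)).2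
          exact h3 p (not_ne_iff.1 hq2) (not_ne_iff.1 hq)

lemma kron_one {a b : ℕ} :
    (Matrix.of fun p q : Fin a × Fin b =>
      (1 : Matrix (Fin a) (Fin a) ℝ) p.1 q.1 * (1 : Matrix (Fin b) (Fin b) ℝ) p.2 q.2) = 1 := by
  ext p q
  simp only [Matrix.of_apply, Matrix.one_apply, Prod.ext_iff]
  split_ifs <;> simp_all

/-- The eigenvalues of `K^{m,r}_{mr}` are `1` with multiplicity `m(r-1)`,
`1-2r` with multiplicity `m-1`, and `1+r(m-2)` with multiplicity `1`. -/
theorem stmt_11 (m r : ℕ) (hm : 1 ≤ m) (hr : 1 ≤ r)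
    (A : Matrix (Fin m × Fin r) (Fin m × Fin r) ℝ)
    (hA : A = Matrix.of fun p q =>
      if p.1 = q.1 then (if p.2 = q.2 then 0 else -1) else 1) :
    A.charpoly.roots =
      Multiset.replicate (m * (r - 1)) (1 : ℝ) +
      Multiset.replicate (m - 1) ((1 : ℝ) - 2 * r) +
      Multiset.replicate 1 ((1 : ℝ) + r * ((m : ℝ) - 2)) := by
  obtain ⟨M, rfl⟩ : ∃ M, m = M + 1 := ⟨m - 1, by omega⟩
  obtain ⟨Rn, rfl⟩ : ∃ Rn, r = Rn + 1 := ⟨r - 1, by omega⟩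
  set PP : Matrix (Fin (M+1) × Fin (Rn+1)) (Fin (M+1) × Fin (Rn+1)) ℝ :=
    Matrix.of fun p q => Qmat M p.1 q.1 * Qmat Rn p.2 q.2 with hPP
  set PiP : Matrix (Fin (M+1) × Fin (Rn+1)) (Fin (M+1) × Fin (Rn+1)) ℝ :=
    Matrix.of fun p q => Rmat M p.1 q.1 * Rmat Rn p.2 q.2 with hPiP
  set d : Fin (M+1) × Fin (Rn+1) → ℝ := fun p =>
    (if p.1 = 0 ∧ p.2 = 0 then ((M:ℝ)+1)*((Rn:ℝ)+1) else 0)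
      - 2 * (if p.2 = 0 then ((Rn:ℝ)+1) else 0) + 1 with hd
  have hPiPP : PiP * PP = 1 := by
    rw [hPiP, hPP, kron_mul, RQ_mat, RQ_mat, kron_one]
  set K1 : Matrix (Fin (M+1) × Fin (Rn+1)) (Fin (M+1) × Fin (Rn+1)) ℝ :=
    Matrix.of fun p q => Jmat M p.1 q.1 * Jmat Rn p.2 q.2 with hK1
  set K2 : Matrix (Fin (M+1) × Fin (Rn+1)) (Fin (M+1) × Fin (Rn+1)) ℝ :=
    Matrix.of fun p q => (1 : Matrix (Fin (M+1)) (Fin (M+1)) ℝ) p.1 q.1 * Jmat Rn p.2 q.2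
    with hK2
  set K3 : Matrix (Fin (M+1) × Fin (Rn+1)) (Fin (M+1) × Fin (Rn+1)) ℝ :=
    Matrix.of fun p q => (1 : Matrix (Fin (M+1)) (Fin (M+1)) ℝ) p.1 q.1 *
      (1 : Matrix (Fin (Rn+1)) (Fin (Rn+1)) ℝ) p.2 q.2 with hK3
  have hA3 : A = K1 - (2:ℝ) • K2 + K3 := by
    rw [hA, hK1, hK2, hK3]
    ext p q
    simp only [Matrix.add_apply, Matrix.sub_apply, Matrix.smul_apply, Matrix.of_apply,
      Matrix.one_apply, Jmat, smul_eq_mul]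
    split_ifs <;> norm_num
  have hc1 : PiP * K1 * PP =
      Matrix.of fun p q : Fin (M+1) × Fin (Rn+1) => Emat M p.1 q.1 * Emat Rn p.2 q.2 := by
    rw [hPiP, hPP, hK1, kron_mul, kron_mul, RJQ_mat, RJQ_mat]
  have hc2 : PiP * K2 * PP =
      Matrix.of fun p q : Fin (M+1) × Fin (Rn+1) =>
        (1 : Matrix (Fin (M+1)) (Fin (M+1)) ℝ) p.1 q.1 * Emat Rn p.2 q.2 := by
    rw [hPiP, hPP, hK2, kron_mul, kron_mul, Matrix.mul_one, RQ_mat, RJQ_mat]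
  have hc3 : PiP * K3 * PP = 1 := by
    rw [hPiP, hPP, hK3, kron_mul, kron_mul, Matrix.mul_one, Matrix.mul_one, RQ_mat, RQ_mat,
      kron_one]
  have hDiag : PiP * A * PP = Matrix.diagonal d := by
    have hexp : PiP * (K1 - (2:ℝ) • K2 + K3) * PP =
        PiP * K1 * PP - (2:ℝ) • (PiP * K2 * PP) + PiP * K3 * PP := by
      rw [Matrix.mul_add, Matrix.add_mul, Matrix.mul_sub, Matrix.sub_mul, Matrix.mul_smul,
        Matrix.smul_mul]
    rw [hA3, hexp, hc1, hc2, hc3]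
    clear! A K1 K2 K3 PP PiP hm hr
    ext ⟨i, j⟩ ⟨k, l⟩
    simp only [Matrix.add_apply, Matrix.sub_apply, Matrix.smul_apply, Matrix.of_apply,
      Matrix.one_apply, Matrix.diagonal_apply, Emat, Prod.ext_iff, hd, smul_eq_mul]
    split_ifs <;> simp_all
  have hchar : A.charpoly = (Matrix.diagonal d).charpoly := by
    rw [← hDiag, charpoly_similar A PP PiP hPiPP]
  rw [hchar, charpoly_diag, roots_prod_diag]
  have h1 : ∀ p : Fin (M+1) × Fin (Rn+1), p.2 ≠ 0 → d p = 1 := by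
    intro p hp; simp [hd, hp]
  have h2 : ∀ p : Fin (M+1) × Fin (Rn+1), p.2 = 0 → p.1 ≠ 0 →
      d p = 1 - 2 * ((Rn:ℝ)+1) := by
    intro p hp hp1; simp [hd, hp, hp1]; ring
  have h3 : ∀ p : Fin (M+1) × Fin (Rn+1), p.2 = 0 → p.1 = 0 →
      d p = 1 + ((Rn:ℝ)+1) * (((M:ℝ)+1) - 2) := by
    intro p hp hp1; simp [hd, hp, hp1]; ring
  have key := map_univ_split M Rn d 1 (1 - 2 * ((Rn:ℝ)+1)) (1 + ((Rn:ℝ)+1) * (((M:ℝ)+1) - 2))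
    h1 h2 h3
  have e1 : (M+1) * ((Rn+1) - 1) = (M+1) * Rn := by simp
  have e2 : (M+1) - 1 = M := by simp
  rw [e1, e2, key]
  congr 3 <;> push_cast <;> ring
end

section
/- For λ ∉ {1, 1-2r, 1+r(m-2)}, the matrix A(K^{m,r}_{mr}) - λI is invertible with inverse (1/(λ+2r-1)) [ (1/(λ-1)) I_m ⊗ (2A(K_r) - (λ+2r-3) I_r) - (1/(λ + r(2-m) - 1)) J ], where J is the all-ones matrix of order mr and A(K_r) = J_r - I_r. -/
set_option maxHeartbeats 1000000


open Kronecker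

/-- For `λ ∉ {1, 1-2r, 1+r(m-2)}`, the matrix `A(K^{m,r}_{mr}) - λI` is invertible,
with inverse
`(1/(λ+2r-1)) [ (1/(λ-1)) Iₘ ⊗ (2A(K_r) - (λ+2r-3)I_r) - (1/(λ+r(2-m)-1)) J ]`. -/
theorem stmt_12 (m r : ℕ) (hm : 1 ≤ m) (hr : 1 ≤ r) (lam : ℝ)
    (h1 : lam ≠ 1) (h2 : lam ≠ 1 - 2 * r) (h3 : lam ≠ 1 + r * ((m : ℝ) - 2))
    (A : Matrix (Fin m × Fin r) (Fin m × Fin r) ℝ)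
    (hA : A = Matrix.of fun p q =>
      if p.1 = q.1 then (if p.2 = q.2 then 0 else -1) else 1)
    (B : Matrix (Fin m × Fin r) (Fin m × Fin r) ℝ)
    (hB : B = (lam + 2 * r - 1)⁻¹ •
      ((lam - 1)⁻¹ •
        ((1 : Matrix (Fin m) (Fin m) ℝ) ⊗ₖ
          ((2 : ℝ) • (Matrix.of fun a b : Fin r => if a = b then (0 : ℝ) else 1) -
            (lam + 2 * r - 3) • (1 : Matrix (Fin r) (Fin r) ℝ))) -
       (lam + r * (2 - (m : ℝ)) - 1)⁻¹ •
          Matrix.of (fun _ _ : Fin m × Fin r => (1 : ℝ)))) :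
    (A - lam • (1 : Matrix (Fin m × Fin r) (Fin m × Fin r) ℝ)) * B = 1 ∧
    B * (A - lam • (1 : Matrix (Fin m × Fin r) (Fin m × Fin r) ℝ)) = 1 := by
  have hd1 : lam - 1 ≠ 0 := sub_ne_zero.mpr h1
  have hd2 : lam + 2 * r - 1 ≠ 0 := by
    intro h; apply h2; linarith
  have hd3 : lam + r * (2 - (m : ℝ)) - 1 ≠ 0 := by
    intro h; apply h3; nlinarith [h]
  set J' : Matrix (Fin m × Fin r) (Fin m × Fin r) ℝ :=
    Matrix.of (fun _ _ : Fin m × Fin r => (1 : ℝ)) with hJ'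
  set K : Matrix (Fin m × Fin r) (Fin m × Fin r) ℝ :=
    Matrix.of (fun p q : Fin m × Fin r => if p.1 = q.1 then (1 : ℝ) else 0) with hK
  have hJJ : J' * J' = ((m : ℝ) * r) • J' := by
    ext p q
    simp [Matrix.mul_apply, hJ', Finset.card_univ]
  have hKK : K * K = (r : ℝ) • K := by
    ext p q
    simp only [Matrix.mul_apply, hK, Matrix.of_apply, Fintype.sum_prod_type, ite_mul, mul_ite,
      one_mul, mul_one, zero_mul, mul_zero, Finset.sum_const, Finset.card_univ, Fintype.card_fin,
      Matrix.smul_apply, smul_eq_mul]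
    simp [Finset.sum_ite_eq, mul_comm, apply_ite Finset.card]
  have hJK : J' * K = (r : ℝ) • J' := by
    ext p q
    simp only [Matrix.mul_apply, hK, hJ', Matrix.of_apply, Fintype.sum_prod_type, one_mul,
      Matrix.smul_apply, smul_eq_mul]
    simp [Finset.sum_ite_eq, apply_ite Finset.card]
  have hKJ : K * J' = (r : ℝ) • J' := by
    ext p q
    simp only [Matrix.mul_apply, hK, hJ', Matrix.of_apply, Fintype.sum_prod_type, mul_one,
      Matrix.smul_apply, smul_eq_mul]
    simp [Finset.sum_ite_eq, apply_ite Finset.card]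
  have hM : A - lam • (1 : Matrix (Fin m × Fin r) (Fin m × Fin r) ℝ)
      = J' - (2 : ℝ) • K + (1 - lam) • 1 := by
    ext p q
    simp only [hA, hJ', hK, Matrix.sub_apply, Matrix.add_apply, Matrix.smul_apply,
      Matrix.of_apply, Matrix.one_apply, smul_eq_mul, Prod.ext_iff]
    by_cases h : p.1 = q.1 <;> by_cases h' : p.2 = q.2 <;> simp [h, h'] <;> ring
  have hB' : B = (lam + 2 * r - 1)⁻¹ •
      ((lam - 1)⁻¹ • ((2 : ℝ) • K - (lam + 2 * r - 1) • 1) -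
        (lam + r * (2 - (m : ℝ)) - 1)⁻¹ • J') := by
    rw [hB]
    congr 1
    congr 1
    congr 1
    ext p q
    simp only [Matrix.kroneckerMap_apply, Matrix.sub_apply, Matrix.smul_apply,
      Matrix.of_apply, Matrix.one_apply, smul_eq_mul, Prod.ext_iff, hK]
    by_cases h : p.1 = q.1 <;> by_cases h' : p.2 = q.2 <;> simp [h, h'] <;> ring
  rw [hM, hB']
  constructor
  · simp only [Matrix.mul_smul, Matrix.smul_mul, Matrix.mul_sub, Matrix.sub_mul,
      Matrix.add_mul, Matrix.mul_add, Matrix.mul_one, Matrix.one_mul,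
      hJJ, hKK, hJK, hKJ, smul_smul, smul_sub, smul_add]
    match_scalars <;> field_simp <;> ring
  · simp only [Matrix.mul_smul, Matrix.smul_mul, Matrix.mul_sub, Matrix.sub_mul,
      Matrix.add_mul, Matrix.mul_add, Matrix.mul_one, Matrix.one_mul,
      hJJ, hKK, hJK, hKJ, smul_smul, smul_sub, smul_add]
    match_scalars <;> field_simp <;> ring
end

section
/- The determinant of the adjacency matrix of K^{m,r}_n (n > mr) equals (1-2r)^{m-1} (-1)^{n-mr-1} ( n(1-2r) + 2r(1 + m(r-1)) - 1 ). -/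
open Matrix

private lemma aux_sum_Dm (r : ℕ) (i : Fin r) :
    (∑ j : Fin r, ((if i = j then (1:ℚ) else 0) - 2)) = 1 - 2 * r := by
  rw [Finset.sum_sub_distrib]
  simp [Finset.sum_ite_eq, mul_comm]

/-- Core determinant computation over `ℚ` on the structured index type. -/
private lemma aux_qdet (m r p : ℕ) (hr : 1 ≤ r)
    (B : Matrix ((Fin r × Fin m) ⊕ Fin p) ((Fin r × Fin m) ⊕ Fin p) ℚ)
    (hB : B = fromBlocks
        (blockDiagonal fun _ : Fin m =>
          Matrix.of fun i j : Fin r => (if i = j then (1:ℚ) else 0) - 2) 0 0 (-1)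
      + Matrix.replicateCol (Fin 1) (fun _ => (1:ℚ)) * Matrix.replicateRow (Fin 1) (fun _ => (1:ℚ))) :
    B.det = ((1 - 2 * (r:ℚ)) ^ m * (-1) ^ p) *
      (1 + (r * m) * (1 - 2 * (r:ℚ))⁻¹ - p) := by
  have hc : (1 - 2 * (r:ℚ)) ≠ 0 := by
    have : (1:ℚ) ≤ (r:ℚ) := by exact_mod_cast hr
    nlinarith
  set Dm : Matrix (Fin r) (Fin r) ℚ :=
    Matrix.of fun i j : Fin r => (if i = j then (1:ℚ) else 0) - 2 with hDm
  set E : Matrix ((Fin r × Fin m) ⊕ Fin p) ((Fin r × Fin m) ⊕ Fin p) ℚ :=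
    fromBlocks (blockDiagonal fun _ : Fin m => Dm) 0 0 (-1) with hE
  set w : ((Fin r × Fin m) ⊕ Fin p) → ℚ :=
    Sum.elim (fun _ => (1 - 2 * (r:ℚ))⁻¹) (fun _ => -1) with hw
  have hEw : E *ᵥ w = fun _ => 1 := by
    funext x
    cases x with
    | inl ik =>
        obtain ⟨i, k⟩ := ik
        show ∑ y, E (Sum.inl (i,k)) y * w y = 1
        rw [Fintype.sum_sum_type]
        have h2 : ∑ j : Fin p, E (Sum.inl (i,k)) (Sum.inr j) * w (Sum.inr j) = 0 := by
          simp [hE]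
        have h1 : ∑ jl : Fin r × Fin m, E (Sum.inl (i,k)) (Sum.inl jl) * w (Sum.inl jl)
            = (∑ jl : Fin r × Fin m, (if k = jl.2 then Dm i jl.1 else 0)) * (1-2*(r:ℚ))⁻¹ := by
          rw [Finset.sum_mul]
          apply Finset.sum_congr rfl
          intro jl _
          simp [hE, hw, blockDiagonal_apply]
        have h3 : (∑ jl : Fin r × Fin m, (if k = jl.2 then Dm i jl.1 else 0))
            = 1 - 2*(r:ℚ) := by
          rw [Fintype.sum_prod_type]
          have hin : ∀ j : Fin r, ∑ l : Fin m, (if k = l then Dm i j else 0) = Dm i j :=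
            fun j => by simp
          simp_rw [hin]
          simpa [hDm] using aux_sum_Dm r i
        rw [h1, h2, h3, add_zero]
        exact mul_inv_cancel₀ hc
    | inr j =>
        simp only [hE, hw, mulVec, dotProduct, Fintype.sum_sum_type]
        simp only [fromBlocks_apply₂₁, fromBlocks_apply₂₂, Sum.elim_inl, Sum.elim_inr,
          Matrix.zero_apply, zero_mul, Finset.sum_const_zero, zero_add, Matrix.neg_apply, one_apply]
        simp [Finset.sum_ite_eq]
  have hfact : B = E * (1 + Matrix.replicateCol (Fin 1) w * Matrix.replicateRow (Fin 1) (fun _ => (1:ℚ))) := by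
    rw [Matrix.mul_add, Matrix.mul_one, ← Matrix.mul_assoc, ← Matrix.replicateCol_mulVec, hEw, hB]
  have hdetE : E.det = (1 - 2 * (r:ℚ)) ^ m * (-1) ^ p := by
    rw [hE, det_fromBlocks_zero₂₁, det_blockDiagonal]
    have hDdet : Dm.det = 1 - 2 * (r:ℚ) := by
      have : Dm = 1 + Matrix.replicateCol (Fin 1) (fun _ => (-2:ℚ)) *
          Matrix.replicateRow (Fin 1) (fun _ => (1:ℚ)) := by
        ext i j
        simp [hDm, Matrix.mul_apply, Matrix.one_apply, sub_eq_add_neg]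
      erw [this, det_one_add_replicateCol_mul_replicateRow]
      simp only [dotProduct, one_mul, Finset.sum_const, Finset.card_univ, Fintype.card_fin,
        nsmul_eq_mul]
      ring
    rw [hDdet, Finset.prod_const, Finset.card_univ, Fintype.card_fin]
    congr 1
    rw [det_neg, det_one, mul_one, Fintype.card_fin]
  have hdetF : (1 + Matrix.replicateCol (Fin 1) w * Matrix.replicateRow (Fin 1) (fun _ => (1:ℚ))).det
      = 1 + (r * m) * (1 - 2 * (r:ℚ))⁻¹ - p := by
    erw [det_one_add_replicateCol_mul_replicateRow]
    simp only [hw, dotProduct, Fintype.sum_sum_type, Sum.elim_inl, Sum.elim_inr,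
      one_mul, Finset.sum_const, Finset.card_univ, Fintype.card_prod, Fintype.card_fin]
    ring
  rw [hfact, det_mul, hdetE, hdetF]

/-- Determinant of the adjacency matrix of `K^{m,r}_n` (`n > mr`): a signed complete
graph on `n` vertices containing `m` vertex-disjoint negative cliques of order `r`
(vertices `0,…,mr-1`, grouped in consecutive blocks of size `r`), all other edges
positive. -/
theorem stmt_13 (m r n : ℕ) (hm : 1 ≤ m) (hr : 1 ≤ r) (hn : m * r < n)
    (A : Matrix (Fin n) (Fin n) ℤ)
    (hA : A = Matrix.of fun i j : Fin n =>
      if i = j then 0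
      else if (i : ℕ) < m * r ∧ (j : ℕ) < m * r ∧ (i : ℕ) / r = (j : ℕ) / r then -1
      else 1) :
    A.det = (1 - 2 * (r : ℤ)) ^ (m - 1) * (-1) ^ (n - m * r - 1) *
      ((n : ℤ) * (1 - 2 * r) + 2 * r * (1 + m * ((r : ℤ) - 1)) - 1) := by
  have hr0 : 0 < r := hr
  set p := n - m * r with hpdef
  have hp1 : 1 ≤ p := by omega
  have hsp : m * r + p = n := by omega
  -- index equivalence
  let e : (Fin r × Fin m) ⊕ Fin p ≃ Fin n :=
    (Equiv.sumCongr ((Equiv.prodComm _ _).trans finProdFinEquiv) (Equiv.refl _)).trans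
      (finSumFinEquiv.trans (finCongr hsp))
  have heL : ∀ (i : Fin r) (k : Fin m), ((e (Sum.inl (i, k)) : Fin n) : ℕ) = i + r * k := by
    intro i k
    simp [e, finProdFinEquiv, finSumFinEquiv]
  have heR : ∀ j : Fin p, ((e (Sum.inr j) : Fin n) : ℕ) = m * r + j := by
    intro j
    simp [e, finSumFinEquiv]
  -- the matrix over ℚ
  have key : ((A.map (Int.cast : ℤ → ℚ)).submatrix e e) = fromBlocks
        (blockDiagonal fun _ : Fin m =>
          Matrix.of fun i j : Fin r => (if i = j then (1:ℚ) else 0) - 2) 0 0 (-1)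
      + Matrix.replicateCol (Fin 1) (fun _ => (1:ℚ)) * Matrix.replicateRow (Fin 1) (fun _ => (1:ℚ)) := by
    ext x y
    have hJ : (Matrix.replicateCol (Fin 1) (fun _ => (1:ℚ)) * Matrix.replicateRow (Fin 1) (fun _ => (1:ℚ))) x y
        = 1 := by
      simp [Matrix.mul_apply]
    have hxy : e x = e y ↔ x = y := EmbeddingLike.apply_eq_iff_eq e
    cases x with
    | inl ik =>
      obtain ⟨i, k⟩ := ik
      cases y with
      | inl jl =>
        obtain ⟨j, l⟩ := jl
        have hvx := heL i k
        have hvy := heL j l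
        have hdivx : ((e (Sum.inl (i,k)) : Fin n) : ℕ) / r = k := by
          rw [hvx, Nat.add_mul_div_left _ _ hr0, Nat.div_eq_of_lt i.is_lt, zero_add]
        have hdivy : ((e (Sum.inl (j,l)) : Fin n) : ℕ) / r = l := by
          rw [hvy, Nat.add_mul_div_left _ _ hr0, Nat.div_eq_of_lt j.is_lt, zero_add]
        have hltx : ((e (Sum.inl (i,k)) : Fin n) : ℕ) < m * r := by
          rw [hvx]
          calc (i:ℕ) + r * k < r + r * k := by omega
            _ = r * (k + 1) := by ring
            _ ≤ r * m := Nat.mul_le_mul_left r k.is_lt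
            _ = m * r := Nat.mul_comm r m
        have hlty : ((e (Sum.inl (j,l)) : Fin n) : ℕ) < m * r := by
          rw [hvy]
          calc (j:ℕ) + r * l < r + r * l := by omega
            _ = r * (l + 1) := by ring
            _ ≤ r * m := Nat.mul_le_mul_left r l.is_lt
            _ = m * r := Nat.mul_comm r m
        simp only [Matrix.submatrix_apply, Matrix.map_apply, hA, Matrix.of_apply,
          Matrix.add_apply, hJ, fromBlocks_apply₁₁, blockDiagonal_apply]
        by_cases hkl : k = l
        · subst hkl
          by_cases hij : i = j
          · subst hij
            simp
            norm_num
          · have hne : e (Sum.inl (i,k)) ≠ e (Sum.inl (j,k)) := by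
              intro h
              have h2 := e.injective h
              simp only [Sum.inl.injEq, Prod.mk.injEq] at h2
              exact hij h2.1
            rw [if_neg hne, if_pos ⟨hltx, hlty, by rw [hdivx, hdivy]⟩]
            simp [hij]
            norm_num
        · have hne : e (Sum.inl (i,k)) ≠ e (Sum.inl (j,l)) := by
            intro h
            have h2 := e.injective h
            simp only [Sum.inl.injEq, Prod.mk.injEq] at h2
            exact hkl h2.2
          have hcond : ¬ (((e (Sum.inl (i,k)) : Fin n) : ℕ) < m * r ∧
              ((e (Sum.inl (j,l)) : Fin n) : ℕ) < m * r ∧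
              ((e (Sum.inl (i,k)) : Fin n) : ℕ) / r = ((e (Sum.inl (j,l)) : Fin n) : ℕ) / r) := by
            rintro ⟨-, -, h⟩
            rw [hdivx, hdivy] at h
            exact hkl (Fin.val_injective h)
          rw [if_neg hne, if_neg hcond]
          simp [hkl]
      | inr j =>
        have hvx := heL i k
        have hvy := heR j
        have hne : e (Sum.inl (i,k)) ≠ e (Sum.inr j) := by
          intro h
          have := congrArg (fun z : Fin n => (z : ℕ)) h
          simp only [hvx, hvy] at this
          have : (i:ℕ) + r * k < m * r := by
            calc (i:ℕ) + r * k < r + r * k := by omega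
              _ = r * (k + 1) := by ring
              _ ≤ r * m := Nat.mul_le_mul_left r k.is_lt
              _ = m * r := Nat.mul_comm r m
          omega
        have hcond : ¬ (((e (Sum.inl (i,k)) : Fin n) : ℕ) < m * r ∧
            ((e (Sum.inr j) : Fin n) : ℕ) < m * r ∧ True) := by
          rintro ⟨-, h, -⟩
          rw [hvy] at h
          omega
        simp only [Matrix.submatrix_apply, Matrix.map_apply, hA, Matrix.of_apply,
          Matrix.add_apply, hJ, fromBlocks_apply₁₂, Matrix.zero_apply]
        rw [if_neg hne, if_neg (by rintro ⟨h1, h2, h3⟩; exact hcond ⟨h1, h2, trivial⟩)]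
        norm_num
    | inr j =>
      cases y with
      | inl ik =>
        obtain ⟨i, k⟩ := ik
        have hvx := heR j
        have hne : e (Sum.inr j) ≠ e (Sum.inl (i,k)) := by
          intro h
          have h2 := e.injective h
          simp at h2
        have hcond : ¬ (((e (Sum.inr j) : Fin n) : ℕ) < m * r ∧
            ((e (Sum.inl (i,k)) : Fin n) : ℕ) < m * r ∧
            ((e (Sum.inr j) : Fin n) : ℕ) / r = ((e (Sum.inl (i,k)) : Fin n) : ℕ) / r) := by
          rintro ⟨h, -, -⟩
          rw [hvx] at h
          omega
        simp only [Matrix.submatrix_apply, Matrix.map_apply, hA, Matrix.of_apply,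
          Matrix.add_apply, hJ, fromBlocks_apply₂₁, Matrix.zero_apply]
        rw [if_neg hne, if_neg hcond]
        norm_num
      | inr j' =>
        simp only [Matrix.submatrix_apply, Matrix.map_apply, hA, Matrix.of_apply,
          Matrix.add_apply, hJ, fromBlocks_apply₂₂, Matrix.neg_apply, one_apply]
        have hvx := heR j
        have hvy := heR j'
        have hcond : ¬ (((e (Sum.inr j) : Fin n) : ℕ) < m * r ∧
            ((e (Sum.inr j') : Fin n) : ℕ) < m * r ∧
            ((e (Sum.inr j) : Fin n) : ℕ) / r = ((e (Sum.inr j') : Fin n) : ℕ) / r) := by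
          rintro ⟨h, -, -⟩
          rw [hvx] at h
          omega
        by_cases hjj : j = j'
        · subst hjj
          simp
        · have hne : e (Sum.inr j) ≠ e (Sum.inr j') := by
            intro h
            have h2 := e.injective h
            simp only [Sum.inr.injEq] at h2
            exact hjj h2
          rw [if_neg hne, if_neg hcond, if_neg hjj]
          norm_num
  -- use the core lemma
  have hq := aux_qdet m r p hr _ key
  rw [Matrix.det_submatrix_equiv_self] at hq
  have hcast : ((A.det : ℤ) : ℚ) = (A.map (Int.cast : ℤ → ℚ)).det :=
    (RingHom.map_det (Int.castRingHom ℚ) A)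
  -- conclude over ℤ via injectivity of the cast
  have hgoal : ((A.det : ℤ) : ℚ) = (((1 - 2 * (r : ℤ)) ^ (m - 1) * (-1) ^ (n - m * r - 1) *
      ((n : ℤ) * (1 - 2 * r) + 2 * r * (1 + m * ((r : ℤ) - 1)) - 1) : ℤ) : ℚ) := by
    rw [hcast, hq]
    have hc : (1 - 2 * (r:ℚ)) ≠ 0 := by
      have : (1:ℚ) ≤ (r:ℚ) := by exact_mod_cast hr
      nlinarith
    have hpcast : (p : ℚ) = (n : ℚ) - m * r := by
      rw [hpdef]
      push_cast [Nat.cast_sub hn.le]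
      ring
    have e1 : ((1 - 2*(r:ℚ)))^m = (1-2*(r:ℚ))^(m-1) * (1-2*(r:ℚ)) := by
      rw [← pow_succ]
      congr 1
      omega
    have e2 : ((-1:ℚ))^p = ((-1:ℚ))^(n - m*r - 1) * (-1) := by
      rw [← pow_succ]
      congr 1
      omega
    rw [e1, e2]
    push_cast
    rw [hpcast]
    field_simp
    ring
  exact_mod_cast hgoal
end

section
/- Let N be the k×k matrix with (i,j) entry n_j for i ≠ j and -n_i on the diagonal (i.e., column j has all entries n_j except the diagonal entry -n_j). Then det(N - λI_k) = ∏_{i=1}^k (-2n_i - λ) + Σ_{i=1}^k n_i ∏_{j≠i} (-2n_j - λ). -/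
open Matrix in
/-- The key pointwise identity, valid when all diagonal terms are nonzero. -/
lemma stmt_14_aux (k : ℕ) (n : Fin k → ℝ) (lam : ℝ)
    (h : ∀ i, -2 * n i - lam ≠ 0) :
    ((Matrix.of fun i j => if i = j then -n i else n j : Matrix (Fin k) (Fin k) ℝ)
        - lam • (1 : Matrix (Fin k) (Fin k) ℝ)).det =
      (∏ i, (-2 * n i - lam)) +
        ∑ i, n i * ∏ j ∈ Finset.univ.erase i, (-2 * n j - lam) := by
  set d : Fin k → ℝ := fun i => -2 * n i - lam with hd
  have hM : (Matrix.of fun i j => if i = j then -n i else n j : Matrix (Fin k) (Fin k) ℝ)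
      - lam • (1 : Matrix (Fin k) (Fin k) ℝ)
      = Matrix.diagonal d + (Matrix.replicateCol Unit 1 : Matrix (Fin k) Unit ℝ) * Matrix.replicateRow Unit n := by
    ext i j
    by_cases hij : i = j <;>
      simp [hij, Matrix.diagonal, Matrix.mul_apply, hd, Matrix.one_apply] <;> ring
  have hdet : (Matrix.diagonal d).det = ∏ i, d i := Matrix.det_diagonal
  have hunit : IsUnit (Matrix.diagonal d).det := by
    rw [hdet]
    exact (Finset.prod_ne_zero_iff.2 fun i _ => h i).isUnit
  have hinv : (Matrix.diagonal d)⁻¹ = Matrix.diagonal (fun i => (d i)⁻¹) := by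
    refine Matrix.inv_eq_right_inv ?_
    have h1 : (fun i => d i * (d i)⁻¹) = fun _ => (1 : ℝ) :=
      funext fun i => mul_inv_cancel₀ (h i)
    rw [Matrix.diagonal_mul_diagonal, h1, Matrix.diagonal_one]
  rw [hM, Matrix.det_add_replicateCol_mul_replicateRow hunit, hdet, hinv]
  have : ((Matrix.replicateRow Unit n : Matrix Unit (Fin k) ℝ) * (Matrix.diagonal (fun i => (d i)⁻¹) : Matrix (Fin k) (Fin k) ℝ) * (Matrix.replicateCol Unit 1 : Matrix (Fin k) Unit ℝ) :
      Matrix Unit Unit ℝ) = Matrix.of fun _ _ : Unit => ∑ i, n i * (d i)⁻¹ := by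
    ext x y
    simp [Matrix.mul_apply, Matrix.replicateRow, Matrix.replicateCol, Matrix.diagonal]
  rw [this, Matrix.det_unique]
  simp only [Matrix.add_apply, Matrix.one_apply_eq, Matrix.of_apply]
  rw [mul_add, mul_one, Finset.mul_sum]
  congr 1
  refine Finset.sum_congr rfl fun i _ => ?_
  rw [← Finset.mul_prod_erase Finset.univ d (Finset.mem_univ i)]
  field_simp [h i]
  linear_combination (∏ x ∈ Finset.univ.erase i, d x) * n i * mul_inv_cancel₀ (h i : d i ≠ 0)

/-- For the `k×k` matrix `N` with `N i j = n j` for `i ≠ j` and `N i i = -n i`,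
`det(N - λI) = ∏ᵢ(-2nᵢ - λ) + Σᵢ nᵢ ∏_{j≠i}(-2nⱼ - λ)`. -/
theorem stmt_14 (k : ℕ) (n : Fin k → ℝ) (lam : ℝ)
    (N : Matrix (Fin k) (Fin k) ℝ)
    (hN : N = Matrix.of fun i j => if i = j then -n i else n j) :
    (N - lam • (1 : Matrix (Fin k) (Fin k) ℝ)).det =
      (∏ i, (-2 * n i - lam)) +
        ∑ i, n i * ∏ j ∈ Finset.univ.erase i, (-2 * n j - lam) := by
  subst hN
  set f : ℝ → ℝ := fun t =>
    ((Matrix.of fun i j => if i = j then -n i else n j : Matrix (Fin k) (Fin k) ℝ)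
      - t • (1 : Matrix (Fin k) (Fin k) ℝ)).det with hf
  set g : ℝ → ℝ := fun t =>
    (∏ i, (-2 * n i - t)) + ∑ i, n i * ∏ j ∈ Finset.univ.erase i, (-2 * n j - t) with hg
  have hfc : Continuous f :=
    (continuous_const.sub (continuous_id.smul continuous_const)).matrix_det
  have hgc : Continuous g := by
    apply Continuous.add
    · exact continuous_finset_prod _ fun i _ =>
        continuous_const.sub continuous_id
    · exact continuous_finset_sum _ fun i _ =>
        continuous_const.mul (continuous_finset_prod _ fun j _ =>
          continuous_const.sub continuous_id)
  have hdense : Dense {t : ℝ | ∀ i, -2 * n i - t ≠ 0} := by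
    have : {t : ℝ | ∀ i, -2 * n i - t ≠ 0} = (⋃ i, {-2 * n i})ᶜ := by
      ext t
      simp only [Set.mem_setOf_eq, Set.mem_compl_iff, Set.mem_iUnion, Set.mem_singleton_iff,
        not_exists, sub_ne_zero]
      exact forall_congr' fun i => ne_comm
    rw [this]
    exact Set.Countable.dense_compl ℝ ((Set.countable_iUnion fun i => Set.countable_singleton _))
  have := Continuous.ext_on hdense hfc hgc (fun t ht => stmt_14_aux k n t ht)
  exact congrFun this lam
end

section
/- Let G be the signed complete graph on n = n_1 + ... + n_k vertices with negative cliques of orders n_1 ≤ ... ≤ n_k covering the vertex set, and let λ_1 ≥ λ_2 ≥ ... ≥ λ_k be the nonzero eigenvalues of A(G) - I_n. Then λ_1 ≥ -2n_1 ≥ λ_2 ≥ -2n_2 ≥ ... ≥ λ_{k-1} ≥ -2n_{k-1} ≥ λ_k ≥ -2n_k. -/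
set_option maxHeartbeats 1600000

open Matrix Polynomial Finset Submodule

section Aux

variable {ι : Type*} [Fintype ι] [DecidableEq ι]

lemma charpoly_conj_aux {R : Type*} [CommRing R] (A U V : Matrix ι ι R) (hUV : U * V = 1) :
    (U * A * V).charpoly = A.charpoly := by
  have hC : (U.map C) * (V.map C) = 1 := by
    have := congrArg (fun (B : Matrix ι ι R) => B.map (C : R →+* R[X])) hUV
    simpa [Matrix.map_mul] using this
  have hch : charmatrix (U * A * V) = U.map C * charmatrix A * V.map C := by
    rw [charmatrix, charmatrix, Matrix.mul_sub, Matrix.sub_mul]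
    congr 1
    · rw [Matrix.mul_assoc, (scalar_commute (X : R[X]) (fun r' => Commute.all _ _) (V.map C)).eq,
        ← Matrix.mul_assoc, hC, Matrix.one_mul]
    · simp [RingHom.mapMatrix_apply, Matrix.map_mul]
  rw [Matrix.charpoly, Matrix.charpoly, hch, det_mul, det_mul]
  have : (U.map C).det * (V.map C).det = 1 := by
    rw [← det_mul, hC, det_one]
  calc (U.map C).det * (charmatrix A).det * (V.map C).det
      = (U.map C).det * (V.map C).det * (charmatrix A).det := by ring
    _ = (charmatrix A).det := by rw [this, one_mul]

lemma charpoly_roots_eigen (A : Matrix ι ι ℝ) (hA : A.IsHermitian) :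
    A.charpoly.roots = Multiset.map hA.eigenvalues Finset.univ.val := by
  have hspec := hA.spectral_theorem
  have hdiag : Matrix.diagonal ((RCLike.ofReal : ℝ → ℝ) ∘ hA.eigenvalues)
      = Matrix.diagonal hA.eigenvalues := by
    congr 1
  have hUV : (hA.eigenvectorUnitary : Matrix ι ι ℝ) *
      (star (hA.eigenvectorUnitary : Matrix ι ι ℝ)) = 1 := hA.eigenvectorUnitary.2.2
  have h1 : A.charpoly = (Matrix.diagonal hA.eigenvalues).charpoly := by
    conv_lhs => rw [hspec]
    rw [hdiag, Unitary.conjStarAlgAut_apply, charpoly_conj_aux _ _ _ hUV]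
  rw [h1]
  have h2 : (Matrix.diagonal hA.eigenvalues).charpoly
      = ((Multiset.map hA.eigenvalues Finset.univ.val).map (fun a => X - C a)).prod := by
    rw [Matrix.charpoly]
    have : charmatrix (Matrix.diagonal hA.eigenvalues)
        = Matrix.diagonal (fun i => (X : ℝ[X]) - C (hA.eigenvalues i)) := by
      ext i j
      by_cases h : i = j
      · subst h; simp
      · simp [h, Matrix.diagonal_apply_ne _ h]
    rw [this, det_diagonal, Multiset.map_map, Finset.prod_eq_multiset_prod]
    rfl
  rw [h2, Polynomial.roots_multiset_prod_X_sub_C]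

lemma quad_repr (A : Matrix ι ι ℝ) (hA : A.IsHermitian) (x : EuclideanSpace ℝ ι) :
    (∑ p, x p * (A.mulVec x) p = ∑ a, hA.eigenvalues a * (hA.eigenvectorBasis.repr x a)^2) ∧
    (∑ p, x p * x p = ∑ a, (hA.eigenvectorBasis.repr x a)^2) := by
  classical
  set b := hA.eigenvectorBasis with hb
  set T : EuclideanSpace ℝ ι →ₗ[ℝ] EuclideanSpace ℝ ι := Matrix.toEuclideanLin A with hT
  have hTapp : ∀ y : EuclideanSpace ℝ ι, ∀ p, T y p = (A.mulVec y) p := by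
    intro y p; rfl
  have hTb : ∀ a, T (b a) = hA.eigenvalues a • b a := by
    intro a
    ext p
    rw [hTapp]
    have := congrFun (hA.mulVec_eigenvectorBasis a) p
    exact this
  have hTx : T x = ∑ a, (hA.eigenvalues a * b.repr x a) • b a := by
    conv_lhs => rw [← b.sum_repr x]
    rw [map_sum]
    refine Finset.sum_congr rfl fun a _ => ?_
    rw [_root_.map_smul, hTb a, smul_smul, mul_comm]
  have hreprT : ∀ a, b.repr (T x) a = hA.eigenvalues a * b.repr x a := by
    intro a
    rw [hTx, map_sum]
    have : ∀ a', (b.repr ((hA.eigenvalues a' * b.repr x a') • b a')) a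
        = (hA.eigenvalues a' * b.repr x a') * (if a' = a then 1 else 0) := by
      intro a'
      rw [_root_.map_smul, b.repr_self]
      simp [EuclideanSpace.single_apply, eq_comm]
    rw [WithLp.ofLp_sum, Finset.sum_apply]
    simp only [this]
    simp [Finset.sum_ite_eq']
  have hinner : ∀ y z : EuclideanSpace ℝ ι,
      (∑ p, y p * z p) = ∑ a, b.repr y a * b.repr z a := by
    intro y z
    have h1 : (inner ℝ y z : ℝ) = ∑ p, y p * z p := by
      rw [PiLp.inner_apply]; simp [RCLike.inner_apply, mul_comm]
    have h2 : (inner ℝ (b.repr y) (b.repr z) : ℝ) = ∑ a, b.repr y a * b.repr z a := by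
      rw [PiLp.inner_apply]; simp [RCLike.inner_apply, mul_comm]
    have h3 : (inner ℝ (b.repr y) (b.repr z) : ℝ) = inner ℝ y z := b.repr.inner_map_map y z
    rw [← h1, ← h3, h2]
  constructor
  · have : ∑ p, x p * (A.mulVec x) p = ∑ p, x p * T x p := by
      refine Finset.sum_congr rfl fun p _ => by rw [hTapp]
    rw [this, hinner x (T x)]
    refine Finset.sum_congr rfl fun a _ => ?_
    rw [hreprT a]; ring
  · rw [hinner x x]
    refine Finset.sum_congr rfl fun a _ => by ring

omit [DecidableEq ι] in
lemma span_onb_finrank {E : Type*} [NormedAddCommGroup E] [InnerProductSpace ℝ E]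
    (b : OrthonormalBasis ι ℝ E) (S : Finset ι) :
    Module.finrank ℝ (span ℝ (⇑b '' ↑S)) = S.card := by
  classical
  have himg : ⇑b '' ↑S = Set.range (fun a : {a // a ∈ S} => b a.1) := by
    ext v; simp [Set.image, Set.range]
  rw [himg]
  have hli : LinearIndependent ℝ (fun a : {a // a ∈ S} => b a.1) :=
    b.orthonormal.linearIndependent.comp Subtype.val Subtype.val_injective
  rw [finrank_span_eq_card hli]
  simp [Fintype.card_coe]

omit [DecidableEq ι] in
lemma repr_eq_zero_of_mem_span {E : Type*} [NormedAddCommGroup E] [InnerProductSpace ℝ E]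
    (b : OrthonormalBasis ι ℝ E) (S : Finset ι) {x : E}
    (hx : x ∈ span ℝ (⇑b '' ↑S)) {a : ι} (ha : a ∉ S) : b.repr x a = 0 := by
  classical
  have h1 : x ∈ span ℝ (⇑b.toBasis '' ↑S) := by rwa [b.coe_toBasis]
  have h2 := b.toBasis.repr_support_subset_of_mem_span (↑S) h1
  have h3 : (b.toBasis.repr x) a = 0 := by
    by_contra h
    exact ha (h2 (Finsupp.mem_support_iff.2 h))
  rwa [b.coe_toBasis_repr_apply] at h3

lemma exists_ne_zero_mem_inf {V : Type*} [AddCommGroup V] [Module ℝ V] [FiniteDimensional ℝ V]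
    (W U : Submodule ℝ V) (h : Module.finrank ℝ V < Module.finrank ℝ W + Module.finrank ℝ U) :
    ∃ x : V, x ∈ W ∧ x ∈ U ∧ x ≠ 0 := by
  have hsum := Submodule.finrank_sup_add_finrank_inf_eq W U
  have hle : Module.finrank ℝ ↥(W ⊔ U) ≤ Module.finrank ℝ V := Submodule.finrank_le _
  have hpos : 0 < Module.finrank ℝ ↥(W ⊓ U) := by omega
  have hne : W ⊓ U ≠ ⊥ := by
    intro hbot
    rw [hbot, finrank_bot] at hpos
    exact lt_irrefl 0 hpos
  obtain ⟨x, hx, hx0⟩ := Submodule.exists_mem_ne_zero_of_ne_bot hne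
  exact ⟨x, hx.1, hx.2, hx0⟩

lemma countP_replicate_aux {α : Type*} (p : α → Prop) [DecidablePred p] (m : ℕ) (a : α) :
    Multiset.countP p (Multiset.replicate m a) = if p a then m else 0 := by
  induction m with
  | zero => simp
  | succ m ih =>
      rw [Multiset.replicate_succ, Multiset.countP_cons, ih]
      split <;> simp

end Aux

/-- Interlacing for the nonzero eigenvalues `λ₁ ≥ … ≥ λ_k` of `A(G) - I` where `G` is
the complete graph on `n = n₁ + … + n_k` vertices with negative cliques of orders
`n₁ ≤ … ≤ n_k` covering the vertex set:
`λ₁ ≥ -2n₁ ≥ λ₂ ≥ -2n₂ ≥ … ≥ λ_k ≥ -2n_k`. -/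
theorem stmt_16 (k : ℕ) (hk : 1 ≤ k) (n : Fin k → ℕ) (hn : ∀ i, 1 ≤ n i)
    (hmono : Monotone n)
    (M : Matrix ((i : Fin k) × Fin (n i)) ((i : Fin k) × Fin (n i)) ℝ)
    (hM : M = Matrix.of fun p q => if p.1 = q.1 then -1 else 1)
    (lam : Fin k → ℝ) (hlam : Antitone lam) (hne : ∀ i, lam i ≠ 0)
    (hroots : M.charpoly.roots =
      Multiset.replicate ((∑ i, n i) - k) 0 +
        (Finset.univ.val : Multiset (Fin k)).map lam) :
    (∀ i : Fin k, -2 * (n i : ℝ) ≤ lam i) ∧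
    (∀ i j : Fin k, (i : ℕ) + 1 = (j : ℕ) → lam j ≤ -2 * (n i : ℝ)) := by
  classical
  set N := ∑ i, n i with hN
  have hNk : k ≤ N := by
    have : (∑ _i : Fin k, 1) ≤ ∑ i, n i := Finset.sum_le_sum fun i _ => hn i
    simpa using this
  have hcard : Fintype.card ((i : Fin k) × Fin (n i)) = N := by simp [hN]
  have hHerm : M.IsHermitian := by
    rw [hM]
    ext p q
    by_cases h : p.1 = q.1 <;>
      simp [Matrix.conjTranspose_apply, Matrix.of_apply, h, eq_comm]
  set eig := hHerm.eigenvalues with heigdef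
  set b := hHerm.eigenvectorBasis with hbdef
  -- block sums
  set s : (((i : Fin k) × Fin (n i)) → ℝ) → Fin k → ℝ := fun x l => ∑ m : Fin (n l), x ⟨l, m⟩ with hs
  -- quadratic form formula
  have hmv : ∀ (x : ((i : Fin k) × Fin (n i)) → ℝ) (p : ((i : Fin k) × Fin (n i))), (M.mulVec x) p = (∑ q, x q) - 2 * s x p.1 := by
    intro x p
    have : (M.mulVec x) p = ∑ q, (if p.1 = q.1 then (-1 : ℝ) else 1) * x q := by
      rw [hM]
      rfl
    rw [this]
    have h1 : ∀ q : (i : Fin k) × Fin (n i), (if p.1 = q.1 then (-1 : ℝ) else 1) * x q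
        = x q - 2 * (if p.1 = q.1 then x q else 0) := by
      intro q
      by_cases h : p.1 = q.1 <;> simp [h] <;> ring
    rw [Finset.sum_congr rfl fun q _ => h1 q, Finset.sum_sub_distrib, ← Finset.mul_sum]
    congr 1
    congr 1
    rw [← Finset.univ_sigma_univ, Finset.sum_sigma]
    rw [show (∑ l : Fin k, ∑ m : Fin (n l), if p.1 = l then x ⟨l, m⟩ else 0)
        = ∑ l : Fin k, (if p.1 = l then s x l else 0) from
      Finset.sum_congr rfl fun l _ => by by_cases h : p.1 = l <;> simp [h, hs]]
    rw [Finset.sum_ite_eq]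
    simp
  have hQ : ∀ x : ((i : Fin k) × Fin (n i)) → ℝ, ∑ p, x p * (M.mulVec x) p
      = (∑ p, x p)^2 - 2 * ∑ l, (s x l)^2 := by
    intro x
    have : ∀ p : (i : Fin k) × Fin (n i), x p * (M.mulVec x) p
        = x p * (∑ q, x q) - 2 * (x p * s x p.1) := by
      intro p; rw [hmv x p]; ring
    rw [Finset.sum_congr rfl fun p _ => this p, Finset.sum_sub_distrib, ← Finset.mul_sum,
      ← Finset.sum_mul]
    congr 1
    · ring
    · congr 1
      rw [← Finset.univ_sigma_univ, Finset.sum_sigma]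
      refine Finset.sum_congr rfl fun l _ => ?_
      calc ∑ m : Fin (n l), x ⟨l, m⟩ * s x (⟨l, m⟩ : (i : Fin k) × Fin (n i)).fst
          = ∑ m : Fin (n l), x ⟨l, m⟩ * s x l := rfl
        _ = (∑ m : Fin (n l), x ⟨l, m⟩) * s x l := by rw [← Finset.sum_mul]
        _ = s x l ^ 2 := by rw [sq]
  -- eigenvalue multiset
  have heig : Multiset.map eig Finset.univ.val =
      Multiset.replicate (N - k) 0 + (Finset.univ.val : Multiset (Fin k)).map lam := by
    rw [← charpoly_roots_eigen M hHerm, hroots]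
  have hcount : ∀ (p : ℝ → Prop) [DecidablePred p],
      (Finset.univ.filter fun a : (i : Fin k) × Fin (n i) => p (eig a)).card
        = (if p 0 then N - k else 0) + (Finset.univ.filter fun j : Fin k => p (lam j)).card := by
    intro p _
    have h1 : (Finset.univ.filter fun a : (i : Fin k) × Fin (n i) => p (eig a)).card
        = Multiset.countP p (Multiset.map eig Finset.univ.val) := by
      rw [Multiset.countP_map]
      rfl
    rw [h1, heig, Multiset.countP_add, countP_replicate_aux, Multiset.countP_map]
    rfl
  -- finrank of ambient space
  have hrk : Module.finrank ℝ (EuclideanSpace ℝ ((i : Fin k) × Fin (n i))) = N := by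
    rw [finrank_euclideanSpace, hcard]
  -- generic strict bounds on span of eigenvectors
  have hspan_lt : ∀ (t : ℝ) (x : EuclideanSpace ℝ ((i : Fin k) × Fin (n i))),
      x ∈ span ℝ (⇑b '' ↑(Finset.univ.filter fun a : (i : Fin k) × Fin (n i) => eig a < t)) → x ≠ 0 →
      ∑ p, x p * (M.mulVec x) p < t * ∑ p, x p * x p := by
    intro t x hx hx0
    obtain ⟨hq1, hq2⟩ := quad_repr M hHerm x
    set S := Finset.univ.filter fun a : (i : Fin k) × Fin (n i) => eig a < t with hS
    have hc0 : ∀ a ∉ S, b.repr x a = 0 := fun a ha => repr_eq_zero_of_mem_span b S hx ha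
    have hex : ∃ a, b.repr x a ≠ 0 := by
      by_contra h
      push_neg at h
      apply hx0
      have h0 : b.repr x = 0 := by ext a; exact h a
      exact b.repr.injective (by simp [h0])
    obtain ⟨a₀, ha₀⟩ := hex
    have ha₀S : a₀ ∈ S := by
      by_contra h
      exact ha₀ (hc0 a₀ h)
    have key : ∑ a, (eig a - t) * (b.repr x a)^2 < 0 := by
      have := Finset.sum_lt_sum (s := (Finset.univ : Finset ((i : Fin k) × Fin (n i))))
        (f := fun a => (eig a - t) * (b.repr x a)^2) (g := fun _ => (0 : ℝ))
        (fun a _ => by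
          by_cases h : a ∈ S
          · have : eig a < t := (Finset.mem_filter.1 h).2
            exact mul_nonpos_of_nonpos_of_nonneg (by linarith) (sq_nonneg _)
          · dsimp only; rw [hc0 a h]; simp)
        ⟨a₀, Finset.mem_univ a₀, by
          have h1 : eig a₀ < t := (Finset.mem_filter.1 ha₀S).2
          have h2 : 0 < (b.repr x a₀)^2 := by positivity
          exact mul_neg_of_neg_of_pos (by linarith) h2⟩
      simpa using this
    have : ∑ a, (eig a - t) * (b.repr x a)^2
        = ∑ a, eig a * (b.repr x a)^2 - t * ∑ a, (b.repr x a)^2 := by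
      rw [Finset.mul_sum, ← Finset.sum_sub_distrib]
      exact Finset.sum_congr rfl fun a _ => by ring
    rw [this] at key
    rw [hq1, hq2]
    linarith
  have hspan_gt : ∀ (t : ℝ) (x : EuclideanSpace ℝ ((i : Fin k) × Fin (n i))),
      x ∈ span ℝ (⇑b '' ↑(Finset.univ.filter fun a : (i : Fin k) × Fin (n i) => t < eig a)) → x ≠ 0 →
      t * ∑ p, x p * x p < ∑ p, x p * (M.mulVec x) p := by
    intro t x hx hx0
    obtain ⟨hq1, hq2⟩ := quad_repr M hHerm x
    set S := Finset.univ.filter fun a : (i : Fin k) × Fin (n i) => t < eig a with hS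
    have hc0 : ∀ a ∉ S, b.repr x a = 0 := fun a ha => repr_eq_zero_of_mem_span b S hx ha
    have hex : ∃ a, b.repr x a ≠ 0 := by
      by_contra h
      push_neg at h
      apply hx0
      have h0 : b.repr x = 0 := by ext a; exact h a
      exact b.repr.injective (by simp [h0])
    obtain ⟨a₀, ha₀⟩ := hex
    have ha₀S : a₀ ∈ S := by
      by_contra h
      exact ha₀ (hc0 a₀ h)
    have key : 0 < ∑ a, (eig a - t) * (b.repr x a)^2 := by
      have := Finset.sum_lt_sum (s := (Finset.univ : Finset ((i : Fin k) × Fin (n i))))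
        (f := fun _ => (0 : ℝ)) (g := fun a => (eig a - t) * (b.repr x a)^2)
        (fun a _ => by
          by_cases h : a ∈ S
          · have : t < eig a := (Finset.mem_filter.1 h).2
            exact mul_nonneg (by linarith) (sq_nonneg _)
          · dsimp only; rw [hc0 a h]; simp)
        ⟨a₀, Finset.mem_univ a₀, by
          have h1 : t < eig a₀ := (Finset.mem_filter.1 ha₀S).2
          have h2 : 0 < (b.repr x a₀)^2 := by positivity
          exact mul_pos (by linarith) h2⟩
      simpa using this
    have heq : ∑ a, (eig a - t) * (b.repr x a)^2
        = ∑ a, eig a * (b.repr x a)^2 - t * ∑ a, (b.repr x a)^2 := by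
      rw [Finset.mul_sum, ← Finset.sum_sub_distrib]
      exact Finset.sum_congr rfl fun a _ => by ring
    rw [heq] at key
    rw [hq1, hq2]
    linarith
  constructor
  · -- Part 1 : -2 n i ≤ lam i
    intro i
    by_contra hcon
    push_neg at hcon
    set t : ℝ := -2 * (n i : ℝ) with ht
    have ht0 : t < 0 := by
      have : (1 : ℝ) ≤ (n i : ℝ) := by exact_mod_cast hn i
      rw [ht]; linarith
    -- many lam's below t
    have hsub : Finset.Ici i ⊆ Finset.univ.filter fun j => lam j < t := by
      intro j hj
      rw [Finset.mem_filter]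
      exact ⟨Finset.mem_univ j, lt_of_le_of_lt (hlam (Finset.mem_Ici.1 hj)) hcon⟩
    have hlow : k - (i : ℕ) ≤ (Finset.univ.filter fun j => lam j < t).card := by
      have := Finset.card_le_card hsub
      rwa [Fin.card_Ici] at this
    -- the span W
    set S := Finset.univ.filter fun a : (i : Fin k) × Fin (n i) => eig a < t with hS
    have hScard : (k : ℕ) - (i : ℕ) ≤ S.card := by
      have := hcount (fun r => r < t)
      rw [if_neg (by push_neg; linarith)] at this
      rw [hS, this]
      omega
    set W := span ℝ (⇑b '' ↑S) with hW
    have hWdim : Module.finrank ℝ W = S.card := span_onb_finrank b S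
    -- the subspace U : block sums vanish for large blocks
    set F : EuclideanSpace ℝ ((i : Fin k) × Fin (n i)) →ₗ[ℝ] ({l : Fin k // n i < n l} → ℝ) :=
      { toFun := fun x l => s x l.1
        map_add' := by
          intro x y
          funext l
          simp [hs, Finset.sum_add_distrib]
        map_smul' := by
          intro c x
          funext l
          simp [hs, Finset.mul_sum] } with hF
    have hcard_sub : Fintype.card {l : Fin k // n i < n l} ≤ k - 1 - (i : ℕ) := by
      rw [Fintype.card_subtype]
      have hsub2 : (Finset.univ.filter fun l => n i < n l) ⊆ Finset.Ioi i := by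
        intro l hl
        rw [Finset.mem_filter] at hl
        rw [Finset.mem_Ioi]
        by_contra h
        push_neg at h
        exact absurd (hmono h) (by omega)
      have := Finset.card_le_card hsub2
      rwa [Fin.card_Ioi] at this
    have hUdim : N - (k - 1 - (i : ℕ)) ≤ Module.finrank ℝ (LinearMap.ker F) := by
      have h1 := LinearMap.finrank_range_add_finrank_ker F
      have h2 : Module.finrank ℝ (LinearMap.range F)
          ≤ Fintype.card {l : Fin k // n i < n l} := by
        have := Submodule.finrank_le (LinearMap.range F)
        rwa [Module.finrank_fintype_fun_eq_card] at this
      rw [hrk] at h1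
      omega
    obtain ⟨x, hxW, hxU, hx0⟩ := exists_ne_zero_mem_inf W (LinearMap.ker F) (by
      rw [hrk, hWdim]
      have hik : (i : ℕ) < k := i.2
      omega)
    -- strict bound from W
    have h1 := hspan_lt t x hxW hx0
    -- lower bound from U
    have hsl : ∀ l : Fin k, n i < n l → s x l = 0 := by
      intro l hl
      have := congrFun (LinearMap.mem_ker.1 hxU) ⟨l, hl⟩
      exact this
    have hkey : ∀ l : Fin k, (s x l)^2 ≤ (n i : ℝ) * ∑ m : Fin (n l), x ⟨l, m⟩ * x ⟨l, m⟩ := by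
      intro l
      by_cases hl : n i < n l
      · rw [hsl l hl]
        have : (0 : ℝ) ≤ ∑ m : Fin (n l), x ⟨l, m⟩ * x ⟨l, m⟩ :=
          Finset.sum_nonneg fun m _ => mul_self_nonneg _
        have hni : (0 : ℝ) ≤ (n i : ℝ) := Nat.cast_nonneg _
        simpa using mul_nonneg hni this
      · push_neg at hl
        have hcs := sq_sum_le_card_mul_sum_sq (s := (Finset.univ : Finset (Fin (n l))))
          (f := fun m => x ⟨l, m⟩)
        have hcard' : ((Finset.univ : Finset (Fin (n l))).card : ℝ) = (n l : ℝ) := by simp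
        rw [hcard'] at hcs
        calc (s x l)^2 = (∑ m : Fin (n l), x ⟨l, m⟩)^2 := by rw [hs]
          _ ≤ (n l : ℝ) * ∑ m : Fin (n l), (x ⟨l, m⟩)^2 := hcs
          _ ≤ (n i : ℝ) * ∑ m : Fin (n l), (x ⟨l, m⟩)^2 := by
              apply mul_le_mul_of_nonneg_right (by exact_mod_cast hl)
              exact Finset.sum_nonneg fun m _ => sq_nonneg _
          _ = (n i : ℝ) * ∑ m : Fin (n l), x ⟨l, m⟩ * x ⟨l, m⟩ := by
              congr 1
              exact Finset.sum_congr rfl fun m _ => sq (x ⟨l, m⟩) ▸ by ring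
    have hsum_sq : ∑ l, (s x l)^2 ≤ (n i : ℝ) * ∑ p, x p * x p := by
      have h2 : ∑ p : (i : Fin k) × Fin (n i), x p * x p = ∑ l : Fin k, ∑ m : Fin (n l), x ⟨l, m⟩ * x ⟨l, m⟩ := by
        rw [← Finset.univ_sigma_univ, Finset.sum_sigma]
      rw [h2, Finset.mul_sum]
      exact Finset.sum_le_sum fun l _ => hkey l
    have hSx : (0 : ℝ) ≤ (∑ p, x p)^2 := sq_nonneg _
    have h3 : t * ∑ p, x p * x p ≤ ∑ p, x p * (M.mulVec x) p := by
      rw [hQ x, ht]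
      nlinarith [hsum_sq, hSx]
    linarith
  · -- Part 2 : lam (i+1) ≤ -2 n i
    intro i j hij
    by_contra hcon
    push_neg at hcon
    set t : ℝ := -2 * (n i : ℝ) with ht
    have ht0 : t < 0 := by
      have : (1 : ℝ) ≤ (n i : ℝ) := by exact_mod_cast hn i
      rw [ht]; linarith
    have hsub : Finset.Iic j ⊆ Finset.univ.filter fun m => t < lam m := by
      intro m hm
      rw [Finset.mem_filter]
      exact ⟨Finset.mem_univ m, lt_of_lt_of_le hcon (hlam (Finset.mem_Iic.1 hm))⟩
    have hlow : (i : ℕ) + 2 ≤ (Finset.univ.filter fun m => t < lam m).card := by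
      have := Finset.card_le_card hsub
      rw [Fin.card_Iic] at this
      omega
    set S := Finset.univ.filter fun a : (i : Fin k) × Fin (n i) => t < eig a with hS
    have hScard : (N - k) + ((i : ℕ) + 2) ≤ S.card := by
      have := hcount (fun r => t < r)
      rw [if_pos ht0] at this
      rw [hS, this]
      omega
    set W := span ℝ (⇑b '' ↑S) with hW
    have hWdim : Module.finrank ℝ W = S.card := span_onb_finrank b S
    -- the subspace U' : block-constant vectors, supported on blocks ≥ i, weighted-sum zero
    set φ : (Fin k → ℝ) →ₗ[ℝ] EuclideanSpace ℝ ((i : Fin k) × Fin (n i)) :=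
      { toFun := fun c => WithLp.toLp 2 (fun p => c p.1)
        map_add' := by intro c d; rfl
        map_smul' := by intro r c; rfl } with hφ
    have hφinj : Function.Injective φ := by
      intro c d h
      funext l
      have := congrFun (congrArg WithLp.ofLp h) ⟨l, ⟨0, hn l⟩⟩
      exact this
    set ψ : (Fin k → ℝ) →ₗ[ℝ] (Fin (i : ℕ) → ℝ) × ℝ :=
      { toFun := fun c => (fun m => c ⟨m.1, lt_trans m.2 i.2⟩, ∑ l, (n l : ℝ) * c l)
        map_add' := by
          intro c d
          ext <;> simp [Finset.sum_add_distrib, mul_add]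
        map_smul' := by
          intro r c
          ext <;> simp [Finset.mul_sum, mul_comm, mul_assoc, mul_left_comm] } with hψ
    have hV₀dim : k - ((i : ℕ) + 1) ≤ Module.finrank ℝ (LinearMap.ker ψ) := by
      have h1 := LinearMap.finrank_range_add_finrank_ker ψ
      have h2 : Module.finrank ℝ (LinearMap.range ψ) ≤ (i : ℕ) + 1 := by
        have h3 := Submodule.finrank_le (LinearMap.range ψ)
        have h4 : Module.finrank ℝ ((Fin (i : ℕ) → ℝ) × ℝ) = (i : ℕ) + 1 := by
          rw [Module.finrank_prod, Module.finrank_fin_fun, Module.finrank_self]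
        rwa [h4] at h3
      have h5 : Module.finrank ℝ (Fin k → ℝ) = k := Module.finrank_fin_fun ℝ
      rw [h5] at h1
      omega
    have hUdim : k - ((i : ℕ) + 1) ≤ Module.finrank ℝ ((LinearMap.ker ψ).map φ) := by
      have := LinearEquiv.finrank_eq (Submodule.equivMapOfInjective φ hφinj (LinearMap.ker ψ))
      omega
    obtain ⟨x, hxW, hxU, hx0⟩ := exists_ne_zero_mem_inf W ((LinearMap.ker ψ).map φ) (by
      rw [hrk, hWdim]
      have hjk : (j : ℕ) < k := j.2
      have hik : (i : ℕ) + 1 < k ∨ (i : ℕ) + 1 = k := by omega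
      omega)
    have h1 := hspan_gt t x hxW hx0
    -- upper bound from U
    obtain ⟨c, hc, hφc⟩ := Submodule.mem_map.1 hxU
    have hcker := LinearMap.mem_ker.1 hc
    have hcsupp : ∀ l : Fin k, (l : ℕ) < (i : ℕ) → c l = 0 := by
      intro l hl
      have := congrFun (congrArg Prod.fst hcker) ⟨(l : ℕ), hl⟩
      simpa [hψ, Fin.ext_iff] using this
    have hcsum : ∑ l, (n l : ℝ) * c l = 0 := by
      have := congrArg Prod.snd hcker
      simpa [hψ] using this
    have hxc : ∀ p : (i : Fin k) × Fin (n i), x p = c p.1 := by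
      intro p
      rw [← hφc]
      rfl
    have hsl : ∀ l : Fin k, s x l = (n l : ℝ) * c l := by
      intro l
      rw [hs]
      simp only [hxc]
      rw [Finset.sum_const, Finset.card_univ, Fintype.card_fin, nsmul_eq_mul]
    have hSx : ∑ p, x p = 0 := by
      rw [← Finset.univ_sigma_univ, Finset.sum_sigma]
      calc ∑ l : Fin k, ∑ m : Fin (n l), x ⟨l, m⟩ = ∑ l : Fin k, s x l :=
            Finset.sum_congr rfl fun l _ => rfl
        _ = ∑ l, (n l : ℝ) * c l := Finset.sum_congr rfl fun l _ => hsl l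
        _ = 0 := hcsum
    have hnsq : ∑ p, x p * x p = ∑ l, (n l : ℝ) * (c l * c l) := by
      rw [← Finset.univ_sigma_univ, Finset.sum_sigma]
      refine Finset.sum_congr rfl fun l _ => ?_
      simp only [hxc]
      rw [Finset.sum_const, Finset.card_univ, Fintype.card_fin, nsmul_eq_mul]
    have hterm : ∀ l : Fin k, 0 ≤ (n l : ℝ) * (c l * c l) * ((n l : ℝ) - (n i : ℝ)) := by
      intro l
      by_cases hcl : c l = 0
      · rw [hcl]; ring_nf; simp
      · have hli : (i : ℕ) ≤ (l : ℕ) := by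
          by_contra h
          push_neg at h
          exact hcl (hcsupp l h)
        have : n i ≤ n l := hmono hli
        have h1 : (0 : ℝ) ≤ (n l : ℝ) := Nat.cast_nonneg _
        have h2 : (0 : ℝ) ≤ c l * c l := mul_self_nonneg _
        have h3 : (0 : ℝ) ≤ (n l : ℝ) - (n i : ℝ) := by
          have : (n i : ℝ) ≤ (n l : ℝ) := by exact_mod_cast this
          linarith
        positivity
    have h3 : ∑ p, x p * (M.mulVec x) p ≤ t * ∑ p, x p * x p := by
      rw [hQ x, hSx, hnsq, ht]
      have hsum : 0 ≤ ∑ l, (n l : ℝ) * (c l * c l) * ((n l : ℝ) - (n i : ℝ)) :=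
        Finset.sum_nonneg fun l _ => hterm l
      have hexp : ∑ l, (s x l)^2 = ∑ l, ((n l : ℝ) * c l)^2 :=
        Finset.sum_congr rfl fun l _ => by rw [hsl l]
      rw [hexp]
      have : ∑ l, ((n l : ℝ) * c l)^2 - (n i : ℝ) * ∑ l, (n l : ℝ) * (c l * c l)
          = ∑ l, (n l : ℝ) * (c l * c l) * ((n l : ℝ) - (n i : ℝ)) := by
        rw [Finset.mul_sum, ← Finset.sum_sub_distrib]
        exact Finset.sum_congr rfl fun l _ => by ring
      nlinarith [hsum, this]
    linarith
end

section
/- Let n̄_1 < n̄_2 < ... < n̄_t be distinct positive reals, m_1, ..., m_t positive integers, and p(λ) = Σ_{i=1}^t m_i n̄_i / (-2n̄_i - λ). Then the polynomial equation 1 + p(λ) = 0 has exactly t real roots λ*_1 > λ*_2 > ... > λ*_t, and they strictly interlace: λ*_1 > -2n̄_1 > λ*_2 > -2n̄_2 > ... > λ*_{t-1} > -2n̄_{t-1} > λ*_t > -2n̄_t. -/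
open Filter Topology Finset Set

/-- Let `n̄₁ < … < n̄_t` be distinct positive reals, `m₁, …, m_t` positive integers,
and `p(λ) = Σᵢ mᵢ n̄ᵢ / (-2n̄ᵢ - λ)`. The equation `1 + p(λ) = 0` has exactly `t`
real roots `λ*₁ > … > λ*_t`, and they strictly interlace:
`λ*₁ > -2n̄₁ > λ*₂ > -2n̄₂ > … > λ*_{t-1} > -2n̄_{t-1} > λ*_t > -2n̄_t`. -/
theorem stmt_17 (t : ℕ) (ht : 1 ≤ t) (nb : Fin t → ℝ) (hpos : ∀ i, 0 < nb i)
    (hmono : StrictMono nb) (m : Fin t → ℕ) (hm : ∀ i, 0 < m i)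
    (p : ℝ → ℝ) (hp : p = fun lam => ∑ i, (m i : ℝ) * nb i / (-2 * nb i - lam)) :
    ∃ ls : Fin t → ℝ,
      StrictAnti ls ∧
      (∀ i, 1 + p (ls i) = 0) ∧
      (∀ x : ℝ, (∀ i, x ≠ -2 * nb i) → 1 + p x = 0 → ∃ i, x = ls i) ∧
      (∀ i : Fin t, -2 * nb i < ls i) ∧
      (∀ i j : Fin t, (i : ℕ) + 1 = (j : ℕ) → ls j < -2 * nb i) := by
  classical
  haveI : NeZero t := ⟨by omega⟩
  set d : Fin t → ℝ := fun i => -2 * nb i with hd_def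
  set c : Fin t → ℝ := fun i => (m i : ℝ) * nb i with hc_def
  have hc : ∀ i, 0 < c i := fun i => by
    have := hpos i; have := hm i
    have h1 : (0:ℝ) < (m i : ℝ) := by exact_mod_cast hm i
    exact mul_pos h1 (hpos i)
  have hdanti : StrictAnti d := by
    intro i j hij
    show -2 * nb j < -2 * nb i
    have := hmono hij
    linarith
  set f : ℝ → ℝ := fun x => 1 + ∑ i, c i / (d i - x) with hf_def
  have hfp : ∀ x, 1 + p x = f x := by
    intro x; rw [hp]
  -- strict monotonicity on intervals avoiding poles
  have hmonoI : ∀ x y : ℝ, x < y → (∀ i, 0 < (d i - x) * (d i - y)) → f x < f y := by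
    intro x y hxy hprod
    have : ∑ i, c i / (d i - x) < ∑ i, c i / (d i - y) := by
      apply Finset.sum_lt_sum_of_nonempty Finset.univ_nonempty
      intro i _
      have hx0 : d i - x ≠ 0 := left_ne_zero_of_mul (hprod i).ne'
      have hy0 : d i - y ≠ 0 := right_ne_zero_of_mul (hprod i).ne'
      have hpos' : 0 < c i / (d i - y) - c i / (d i - x) := by
        rw [div_sub_div _ _ hy0 hx0]
        apply div_pos
        · have h1 : c i * (d i - x) - (d i - y) * c i = c i * (y - x) := by ring
          rw [h1]; exact mul_pos (hc i) (by linarith)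
        · have := hprod i
          nlinarith
      linarith
    simp only [hf_def]
    linarith
  -- continuity away from poles
  have hcont : ∀ x : ℝ, (∀ i, x ≠ d i) → ContinuousAt f x := by
    intro x hx
    apply ContinuousAt.add continuousAt_const
    have : ∀ i ∈ Finset.univ, Tendsto (fun y => c i / (d i - y)) (𝓝 x) (𝓝 (c i / (d i - x))) := by
      intro i _
      exact Tendsto.div tendsto_const_nhds
        ((continuous_const.sub continuous_id).tendsto x) (sub_ne_zero.mpr fun h => hx i h.symm)
    exact tendsto_finset_sum _ this
  have hdne : ∀ i j : Fin t, i ≠ j → d i ≠ d j := fun i j h => hdanti.injective.ne h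
  -- behaviour just right of a pole: f is very negative
  have hright : ∀ (k : Fin t) (u : ℝ), d k < u → ∃ x, d k < x ∧ x < u ∧ f x < 0 := by
    intro k u hu
    have hg : Tendsto (fun x => 1 + ∑ i ∈ Finset.univ.erase k, c i / (d i - x)) (𝓝[>] (d k))
        (𝓝 (1 + ∑ i ∈ Finset.univ.erase k, c i / (d i - d k))) := by
      apply Tendsto.mono_left _ nhdsWithin_le_nhds
      apply Tendsto.add tendsto_const_nhds
      apply tendsto_finset_sum
      intro i hi
      exact Tendsto.div tendsto_const_nhds
        ((continuous_const.sub continuous_id).tendsto (d k))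
        (sub_ne_zero.mpr (hdne i k (Finset.ne_of_mem_erase hi)))
    have h1 : Tendsto (fun x => x - d k) (𝓝[>] (d k)) (𝓝[>] 0) := by
      apply tendsto_nhdsWithin_of_tendsto_nhds_of_eventually_within
      · have : Tendsto (fun x : ℝ => x - d k) (𝓝 (d k)) (𝓝 (d k - d k)) :=
          (continuous_id.sub continuous_const).tendsto (d k)
        simpa using this.mono_left nhdsWithin_le_nhds
      · filter_upwards [self_mem_nhdsWithin] with x hx
        simpa [Set.mem_Ioi, sub_pos] using hx
    have h2 : Tendsto (fun x => c k * (x - d k)⁻¹) (𝓝[>] (d k)) atTop :=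
      (tendsto_inv_nhdsGT_zero.comp h1).const_mul_atTop (hc k)
    have h3 : Tendsto (fun x => c k / (d k - x)) (𝓝[>] (d k)) atBot := by
      have := tendsto_neg_atTop_atBot.comp h2
      refine this.congr fun x => ?_
      have hx : d k - x = -(x - d k) := by ring
      rw [Function.comp_apply, hx, div_neg, div_eq_mul_inv]
    have hfb : Tendsto f (𝓝[>] (d k)) atBot := by
      have hsum : ∀ x, (1 + ∑ i ∈ Finset.univ.erase k, c i / (d i - x)) + c k / (d k - x)
          = f x := by
        intro x
        simp only [hf_def]
        rw [← Finset.add_sum_erase _ _ (Finset.mem_univ k)]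
        ring
      exact (hg.add_atBot h3).congr hsum
    have hev := hfb.eventually (eventually_lt_atBot 0)
    have hIoo : Set.Ioo (d k) u ∈ 𝓝[>] (d k) := Ioo_mem_nhdsGT_of_mem ⟨le_refl _, hu⟩
    obtain ⟨x, hx1, hx2⟩ := (hev.and (eventually_of_mem hIoo fun x hx => hx)).exists
    exact ⟨x, hx2.1, hx2.2, hx1⟩
  -- behaviour just left of a pole: f is very positive
  have hleft : ∀ (k : Fin t) (l : ℝ), l < d k → ∃ x, l < x ∧ x < d k ∧ 0 < f x := by
    intro k l hl
    have hg : Tendsto (fun x => 1 + ∑ i ∈ Finset.univ.erase k, c i / (d i - x)) (𝓝[<] (d k))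
        (𝓝 (1 + ∑ i ∈ Finset.univ.erase k, c i / (d i - d k))) := by
      apply Tendsto.mono_left _ nhdsWithin_le_nhds
      apply Tendsto.add tendsto_const_nhds
      apply tendsto_finset_sum
      intro i hi
      exact Tendsto.div tendsto_const_nhds
        ((continuous_const.sub continuous_id).tendsto (d k))
        (sub_ne_zero.mpr (hdne i k (Finset.ne_of_mem_erase hi)))
    have h1 : Tendsto (fun x => d k - x) (𝓝[<] (d k)) (𝓝[>] 0) := by
      apply tendsto_nhdsWithin_of_tendsto_nhds_of_eventually_within
      · have : Tendsto (fun x : ℝ => d k - x) (𝓝 (d k)) (𝓝 (d k - d k)) :=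
          (continuous_const.sub continuous_id).tendsto (d k)
        simpa using this.mono_left nhdsWithin_le_nhds
      · filter_upwards [self_mem_nhdsWithin] with x hx
        simpa [Set.mem_Ioi, sub_pos] using hx
    have h3 : Tendsto (fun x => c k / (d k - x)) (𝓝[<] (d k)) atTop := by
      have h2 : Tendsto (fun x => c k * (d k - x)⁻¹) (𝓝[<] (d k)) atTop :=
        (tendsto_inv_nhdsGT_zero.comp h1).const_mul_atTop (hc k)
      refine h2.congr fun x => ?_
      rw [div_eq_mul_inv]
    have hfb : Tendsto f (𝓝[<] (d k)) atTop := by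
      have hsum : ∀ x, (1 + ∑ i ∈ Finset.univ.erase k, c i / (d i - x)) + c k / (d k - x)
          = f x := by
        intro x
        simp only [hf_def]
        rw [← Finset.add_sum_erase _ _ (Finset.mem_univ k)]
        ring
      exact (hg.add_atTop h3).congr hsum
    have hev := hfb.eventually (eventually_gt_atTop 0)
    have hIoo : Set.Ioo l (d k) ∈ 𝓝[<] (d k) := Ioo_mem_nhdsLT_of_mem ⟨hl, le_refl _⟩
    obtain ⟨x, hx1, hx2⟩ := (hev.and (eventually_of_mem hIoo fun x hx => hx)).exists
    exact ⟨x, hx2.1, hx2.2, hx1⟩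
  -- behaviour at +∞ : f tends to 1
  have htop : ∀ a : ℝ, ∃ x, a < x ∧ 0 < f x := by
    intro a
    have hsum0 : Tendsto (fun x => ∑ i, c i / (d i - x)) atTop (𝓝 0) := by
      have h0 : (0:ℝ) = ∑ _i : Fin t, (0:ℝ) := by simp
      rw [h0]
      apply tendsto_finset_sum
      intro i _
      have hx : Tendsto (fun x : ℝ => x + -(d i)) atTop atTop :=
        tendsto_atTop_add_const_right _ _ tendsto_id
      have hdiv : Tendsto (fun x => c i / (x + -(d i))) atTop (𝓝 0) :=
        tendsto_const_nhds.div_atTop hx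
      have := hdiv.neg
      rw [neg_zero] at this
      refine this.congr fun x => ?_
      have hx2 : d i - x = -(x + -(d i)) := by ring
      rw [hx2, div_neg]
    have hf1 : Tendsto f atTop (𝓝 1) := by
      have h := (tendsto_const_nhds (x := (1:ℝ)) (f := atTop)).add hsum0
      simpa using h
    obtain ⟨x, hx⟩ := ((hf1.eventually (eventually_gt_nhds one_pos)).and
      (eventually_gt_atTop a)).exists
    exact ⟨x, hx.2, hx.1⟩
  -- key claim: a root in each interval
  have key : ∀ k : Fin t, ∃ r, d k < r ∧ (∀ j : Fin t, (j : ℕ) + 1 = (k : ℕ) → r < d j) ∧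
      f r = 0 := by
    intro k
    rcases Nat.eq_zero_or_pos k.1 with hk0 | hk1
    · -- k = 0 : interval (d 0, ∞)
      obtain ⟨a, hka, _, hfa⟩ := hright k (d k + 1) (by linarith)
      obtain ⟨b, hab, hfb⟩ := htop a
      have hcO : ContinuousOn f (Set.Icc a b) := by
        intro x hx
        refine (hcont x ?_).continuousWithinAt
        intro i
        have hik : k ≤ i := by
          rw [Fin.le_def]; omega
        have : d i ≤ d k := hdanti.antitone hik
        have : d i < x := lt_of_le_of_lt this (lt_of_lt_of_le hka hx.1)
        exact (ne_of_gt this)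
      have h0mem : (0:ℝ) ∈ Set.Icc (f a) (f b) := ⟨hfa.le, hfb.le⟩
      obtain ⟨r, hr, hfr⟩ := intermediate_value_Icc hab.le hcO h0mem
      refine ⟨r, lt_of_lt_of_le hka hr.1, ?_, hfr⟩
      intro j hj; omega
    · -- k ≥ 1 : interval (d k, d (k-1))
      set j' : Fin t := ⟨k.1 - 1, by omega⟩ with hj'_def
      have hj'k : j' < k := by rw [Fin.lt_def]; simp only [hj'_def, Fin.val_mk]; omega
      have hdj : d k < d j' := hdanti hj'k
      obtain ⟨a, hka, haj, hfa⟩ := hright k (d j') hdj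
      obtain ⟨b, hab, hbj, hfb⟩ := hleft j' a haj
      have hcO : ContinuousOn f (Set.Icc a b) := by
        intro x hx
        refine (hcont x ?_).continuousWithinAt
        intro i
        rcases le_or_gt k i with hik | hik
        · have : d i ≤ d k := hdanti.antitone hik
          have : d i < x := lt_of_le_of_lt this (lt_of_lt_of_le hka hx.1)
          exact ne_of_gt this
        · have hij' : i ≤ j' := by
            rw [Fin.le_def]; rw [Fin.lt_def] at hik; simp [hj'_def]; omega
          have : d j' ≤ d i := hdanti.antitone hij'
          have : x < d i := lt_of_le_of_lt hx.2 (lt_of_lt_of_le hbj this)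
          exact ne_of_lt this
      have h0mem : (0:ℝ) ∈ Set.Icc (f a) (f b) := ⟨hfa.le, hfb.le⟩
      obtain ⟨r, hr, hfr⟩ := intermediate_value_Icc hab.le hcO h0mem
      refine ⟨r, lt_of_lt_of_le hka hr.1, ?_, hfr⟩
      intro j hj
      have hjj' : j = j' := by
        apply Fin.ext; simp [hj'_def]; omega
      rw [hjj']
      exact lt_of_le_of_lt hr.2 hbj
  choose ls h1 h2 h3 using key
  refine ⟨ls, ?_, ?_, ?_, ?_, ?_⟩
  · -- StrictAnti
    intro i j hij
    have hj1 : 1 ≤ j.1 := by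
      rw [Fin.lt_def] at hij; omega
    set j' : Fin t := ⟨j.1 - 1, by omega⟩ with hj'_def
    have hlj : ls j < d j' := h2 j j' (by simp [hj'_def]; omega)
    have hij' : i ≤ j' := by
      rw [Fin.le_def]; rw [Fin.lt_def] at hij; simp [hj'_def]; omega
    have hdd : d j' ≤ d i := hdanti.antitone hij'
    have := h1 i
    linarith
  · intro i; rw [hfp]; exact h3 i
  · -- completeness
    intro x hx hfx
    rw [hfp] at hfx
    have hxd : ∀ i, x ≠ d i := hx
    set last : Fin t := ⟨t - 1, by omega⟩ with hlast_def
    have hlastx : d last < x := by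
      rcases lt_trichotomy x (d last) with h | h | h
      · exfalso
        have hsumpos : 0 < ∑ i, c i / (d i - x) := by
          apply Finset.sum_pos _ Finset.univ_nonempty
          intro i _
          apply div_pos (hc i)
          have hle : i ≤ last := by rw [Fin.le_def]; simp [hlast_def]; omega
          have : d last ≤ d i := hdanti.antitone hle
          linarith
        have : 0 < f x := by simp only [hf_def]; linarith
        rw [hfx] at this; exact lt_irrefl _ this
      · exact absurd h (hxd last)
      · exact h
    have hSne : (Finset.univ.filter (fun i => d i < x)).Nonempty :=
      ⟨last, Finset.mem_filter.mpr ⟨Finset.mem_univ _, hlastx⟩⟩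
    set k := (Finset.univ.filter (fun i => d i < x)).min' hSne with hk_def
    have hkmem := (Finset.univ.filter (fun i => d i < x)).min'_mem hSne
    have hkx : d k < x := (Finset.mem_filter.mp hkmem).2
    have hkmin : ∀ i : Fin t, d i < x → k ≤ i := by
      intro i hi
      rw [hk_def]
      exact Finset.min'_le _ i (Finset.mem_filter.mpr ⟨Finset.mem_univ _, hi⟩)
    refine ⟨k, ?_⟩
    have hcond : ∀ i, 0 < (d i - x) * (d i - ls k) := by
      intro i
      rcases le_or_gt k i with hik | hik
      · have hdik : d i ≤ d k := hdanti.antitone hik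
        have hx1 : d i - x < 0 := by linarith
        have hx2 : d i - ls k < 0 := by have := h1 k; linarith
        exact mul_pos_of_neg_of_neg hx1 hx2
      · have hk1 : 1 ≤ k.1 := by rw [Fin.lt_def] at hik; omega
        have hnotmem : ¬ d i < x := by
          intro hdi
          exact absurd (hkmin i hdi) (not_le.mpr hik)
        have hxdi : x < d i := lt_of_le_of_ne (not_lt.mp hnotmem) (hxd i)
        set j' : Fin t := ⟨k.1 - 1, by omega⟩ with hj'_def
        have hlj : ls k < d j' := h2 k j' (by simp [hj'_def]; omega)
        have hij' : i ≤ j' := by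
          rw [Fin.le_def]; rw [Fin.lt_def] at hik; simp [hj'_def]; omega
        have hdd : d j' ≤ d i := hdanti.antitone hij'
        have hx1 : 0 < d i - x := by linarith
        have hx2 : 0 < d i - ls k := by linarith
        exact mul_pos hx1 hx2
    rcases lt_trichotomy x (ls k) with h | h | h
    · exfalso
      have := hmonoI x (ls k) h hcond
      rw [hfx, h3 k] at this
      exact lt_irrefl _ this
    · exact h
    · exfalso
      have hcond' : ∀ i, 0 < (d i - ls k) * (d i - x) := by
        intro i; have := hcond i; linarith [mul_comm (d i - x) (d i - ls k)]
      have := hmonoI (ls k) x h hcond'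
      rw [hfx, h3 k] at this
      exact lt_irrefl _ this
  · exact h1
  · intro i j hij; exact h2 j i hij
end

section
/- Let G be an r-regular star block graph with k blocks sharing one cut-vertex, with l negative blocks and k-l positive blocks. Then 1 is an eigenvalue of A(G) with multiplicity at least (r-2)(l-1), 2-r with multiplicity at least l-1, -1 with multiplicity at least (r-2)(k-l-1), and r-2 with multiplicity at least k-l-1. -/
open Polynomial Matrix Module


/-- Edge sign of block `b`: `-1` for the first `l` (negative) blocks, `+1` otherwise. -/
def blockSign (k l : ℕ) (b : Fin k) : ℝ := if (b : ℕ) < l then -1 else 1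

/-- Adjacency matrix of the `r`-regular star block graph with `k` blocks sharing one
cut-vertex, the first `l` blocks being negative cliques and the rest positive. -/
def starBlockAdj (k l r : ℕ) :
    Matrix (Unit ⊕ Fin k × Fin (r - 1)) (Unit ⊕ Fin k × Fin (r - 1)) ℝ :=
  fun p q =>
    match p, q with
    | .inl _, .inl _ => 0
    | .inl _, .inr (b, _) => blockSign k l b
    | .inr (b, _), .inl _ => blockSign k l b
    | .inr (b, a), .inr (b', a') =>
        if b = b' then (if a = a' then 0 else blockSign k l b) else 0

variable {n : Type*} [Fintype n] [DecidableEq n]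

lemma charpoly_shift (A : Matrix n n ℝ) (μ : ℝ) :
    (A - μ • 1).charpoly = A.charpoly.comp (X + C μ) := by
  let f : ℝ[X] →+* ℝ[X] := eval₂RingHom C (X + C μ)
  rw [Matrix.charpoly, Matrix.charpoly]
  show _ = f (A.charmatrix.det)
  rw [RingHom.map_det]
  congr 1
  ext i j
  simp only [charmatrix_apply, RingHom.mapMatrix_apply, Matrix.map_apply, Matrix.sub_apply,
    Matrix.smul_apply, Matrix.one_apply, diagonal_apply, map_sub, f, coe_eval₂RingHom, eval₂_C,
    scalar_apply]
  by_cases h : i = j <;> simp [h, eval₂_X, map_sub] <;> ring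

lemma card_le_rootMultiplicity (A : Matrix n n ℝ) (μ : ℝ) {ι : Type*} [Fintype ι]
    (v : ι → n → ℝ) (hv : ∀ i, A.mulVec (v i) = μ • v i) (hind : LinearIndependent ℝ v) :
    Fintype.card ι ≤ A.charpoly.rootMultiplicity μ := by
  classical
  set ψ : Module.End ℝ (n → ℝ) := Matrix.mulVecLin (A - μ • 1) with hψ
  have hker : ∀ i, v i ∈ LinearMap.ker ψ := by
    intro i
    simp only [LinearMap.mem_ker, hψ, Matrix.mulVecLin_apply, Matrix.sub_mulVec, hv i,
      Matrix.smul_mulVec, Matrix.one_mulVec]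
    abel
  -- card ι ≤ finrank of kernel
  have h1 : Fintype.card ι ≤ Module.finrank ℝ (LinearMap.ker ψ) := by
    have : LinearIndependent ℝ (fun i => (⟨v i, hker i⟩ : LinearMap.ker ψ)) := by
      apply LinearIndependent.of_comp (LinearMap.ker ψ).subtype
      exact hind
    exact this.fintype_card_le_finrank
  have h2 : LinearMap.ker ψ ≤ ψ.maxGenEigenspace 0 := by
    intro x hx
    rw [Module.End.mem_maxGenEigenspace]
    exact ⟨1, by simpa using hx⟩
  have h3 : Module.finrank ℝ (ψ.maxGenEigenspace 0) = ψ.charpoly.natTrailingDegree :=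
    ψ.finrank_maxGenEigenspace_zero_eq
  have h4 : ψ.charpoly = (A - μ • 1).charpoly := by
    rw [← LinearMap.charpoly_toMatrix ψ (Pi.basisFun ℝ n)]
    congr 1
    rw [LinearMap.toMatrix_eq_toMatrix']
    exact LinearMap.toMatrix'_toLin' _
  have hcard : Fintype.card ι ≤ ((A - μ • 1).charpoly).natTrailingDegree := by
    rw [← h4]
    exact h1.trans (le_of_le_of_eq (Submodule.finrank_mono h2) h3)
  -- X ^ card ι divides shifted charpoly
  have hdvd : (X : ℝ[X]) ^ Fintype.card ι ∣ (A - μ • 1).charpoly := by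
    rw [X_pow_dvd_iff]
    intro d hd
    exact coeff_eq_zero_of_lt_natTrailingDegree (lt_of_lt_of_le hd hcard)
  rw [charpoly_shift] at hdvd
  have hdvd2 : (X - C μ) ^ Fintype.card ι ∣ A.charpoly := by
    have := _root_.map_dvd (aeval (R := ℝ) (X - C μ)) hdvd
    simpa [← comp_eq_aeval, comp_assoc, map_pow] using this
  rw [Polynomial.le_rootMultiplicity_iff (A.charpoly_monic).ne_zero]
  exact hdvd2


def sAdj (k l m : ℕ) : Matrix (Unit ⊕ Fin k × Fin (m+1)) (Unit ⊕ Fin k × Fin (m+1)) ℝ :=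
  starBlockAdj k l (m+2)

def eVec (k m : ℕ) (b : Fin k) (a : Fin (m+1)) : (Unit ⊕ Fin k × Fin (m+1)) → ℝ :=
  fun p => if p = Sum.inr (b, a) then 1 else 0

def uVec (k m : ℕ) (b : Fin k) : (Unit ⊕ Fin k × Fin (m+1)) → ℝ :=
  fun p => match p with
  | .inl _ => 0
  | .inr (c, _) => if c = b then 1 else 0

lemma mulVec_eVec_sub (k l m : ℕ) (b : Fin k) (a : Fin (m+1)) (ha : a ≠ 0) :
    (sAdj k l m).mulVec (eVec k m b a - eVec k m b 0) =
      (-blockSign k l b) • (eVec k m b a - eVec k m b 0) := by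
  funext p
  have hred : (sAdj k l m).mulVec (eVec k m b a - eVec k m b 0) p
      = sAdj k l m p (Sum.inr (b,a)) - sAdj k l m p (Sum.inr (b,0)) := by
    simp [Matrix.mulVec, dotProduct, eVec, mul_sub, Finset.sum_sub_distrib,
      mul_ite, mul_one, mul_zero, Finset.sum_ite_eq']
  rw [hred]
  rcases p with _ | ⟨c, a'⟩
  · simp [sAdj, starBlockAdj, eVec]
  · simp only [sAdj, starBlockAdj, eVec, Pi.smul_apply, Pi.sub_apply, Sum.inr.injEq,
      Prod.mk.injEq, smul_eq_mul]
    by_cases hc : c = b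
    · subst hc
      by_cases h1 : a' = a
      · subst h1
        simp [ha]
      · by_cases h2 : a' = 0
        · subst h2
          simp [h1, Ne.symm h1]
        · simp [h1, h2, Ne.symm h1]
    · simp [hc]

lemma mulVec_uVec_sub (k l m : ℕ) (b c : Fin k) (hbc : b ≠ c)
    (hsign : blockSign k l c = blockSign k l b) :
    (sAdj k l m).mulVec (uVec k m b - uVec k m c) =
      (blockSign k l b * m) • (uVec k m b - uVec k m c) := by
  have inner : ∀ (t : ℝ) (a0 : Fin (m+1)), (∑ a : Fin (m+1), if a0 = a then 0 else t) = m * t := by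
    intro t a0
    have h : (∑ a : Fin (m+1), if a0 = a then (0:ℝ) else t)
        = (∑ a : Fin (m+1), (t - if a0 = a then t else 0)) := by
      apply Finset.sum_congr rfl; intro x _; split <;> ring
    rw [h, Finset.sum_sub_distrib, Finset.sum_const, Finset.sum_ite_eq]
    simp
    ring
  have key : ∀ (d : Fin k) (p), (sAdj k l m).mulVec (uVec k m d) p
      = ∑ a : Fin (m+1), sAdj k l m p (Sum.inr (d, a)) := by
    intro d p
    simp [Matrix.mulVec, dotProduct, uVec, Fintype.sum_sum_type, Fintype.sum_prod_type,
      mul_ite, mul_one, mul_zero]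
    have hx : ∀ x : Fin k, (∑ a : Fin (m+1), if x = d then sAdj k l m p (Sum.inr (x,a)) else 0)
        = if x = d then (∑ a : Fin (m+1), sAdj k l m p (Sum.inr (d,a))) else 0 := by
      intro x
      by_cases h : x = d
      · subst h; simp
      · simp [h]
    rw [Finset.sum_congr rfl (fun x _ => hx x), Finset.sum_ite_eq']
    simp
  funext p
  rw [Matrix.mulVec_sub, Pi.sub_apply, key, key]
  rcases p with _ | ⟨e, a0⟩
  · simp [sAdj, starBlockAdj, uVec, hsign]
  · simp only [sAdj, starBlockAdj, uVec, Pi.smul_apply, Pi.sub_apply, smul_eq_mul]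
    by_cases hb : e = b
    · subst hb
      have hc : e ≠ c := hbc
      simp [hc, inner]
      ring
    · by_cases hc : e = c
      · subst hc
        simp [hb, inner, hsign]
        ring
      · simp [hb, hc]

lemma linearIndependent_of_eval {ι V : Type*} [Fintype ι] [DecidableEq ι]
    (v : ι → V → ℝ) (pt : ι → V) (h : ∀ i j, v i (pt j) = if i = j then 1 else 0) :
    LinearIndependent ℝ v := by
  rw [Fintype.linearIndependent_iff]
  intro g hg i
  have h2 := congrFun hg (pt i)
  simpa [Finset.sum_apply, h, mul_ite, Finset.sum_ite_eq'] using h2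

lemma eVec_eval (k m : ℕ) (b c : Fin k) (a a' : Fin (m+1)) :
    eVec k m b a (Sum.inr (c, a')) = if c = b ∧ a' = a then 1 else 0 := by
  simp [eVec, Sum.inr.injEq, Prod.mk.injEq]

lemma fam_sumzero (k l m : ℕ) {c : ℕ} (g : Fin c → Fin k) (hg : Function.Injective g)
    (ε : ℝ) (hsig : ∀ i, blockSign k l (g i) = ε) :
    c * m ≤ (sAdj k l m).charpoly.rootMultiplicity (-ε) := by
  have key := card_le_rootMultiplicity (sAdj k l m) (-ε)
    (fun i : Fin c × Fin m => eVec k m (g i.1) i.2.succ - eVec k m (g i.1) 0) ?_ ?_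
  · simpa using key
  · rintro ⟨b, j⟩
    have h := mulVec_eVec_sub k l m (g b) j.succ (Fin.succ_ne_zero j)
    rwa [hsig b] at h
  · apply linearIndependent_of_eval _ (fun i : Fin c × Fin m => Sum.inr (g i.1, i.2.succ))
    rintro ⟨b, j⟩ ⟨b', j'⟩
    simp only [Pi.sub_apply, eVec_eval]
    rw [if_neg (show ¬(g b' = g b ∧ j'.succ = 0) from fun hcon => Fin.succ_ne_zero j' hcon.2)]
    by_cases hb : b' = b
    · subst hb
      by_cases hj : j' = j
      · subst hj; simp
      · rw [if_neg (show ¬(g b' = g b' ∧ j'.succ = j.succ) from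
            fun hcon => hj (Fin.succ_inj.mp hcon.2)),
          if_neg (show ¬((b', j) = (b', j')) from
            fun hcon => hj (by simpa using hcon.symm))]
        ring
    · rw [if_neg (show ¬(g b' = g b ∧ j'.succ = j.succ) from fun hcon => hb (hg hcon.1)),
        if_neg (show ¬((b, j) = (b', j')) from fun hcon => hb (by simp at hcon; exact hcon.1.symm))]
      ring

lemma fam_diff (k l m : ℕ) {c : ℕ} (g : Fin (c+1) → Fin k) (hg : Function.Injective g)
    (ε : ℝ) (hsig : ∀ i, blockSign k l (g i) = ε) :
    c ≤ (sAdj k l m).charpoly.rootMultiplicity (ε * m) := by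
  have key := card_le_rootMultiplicity (sAdj k l m) (ε * m)
    (fun j : Fin c => uVec k m (g j.succ) - uVec k m (g 0)) ?_ ?_
  · simpa using key
  · intro j
    have h := mulVec_uVec_sub k l m (g j.succ) (g 0)
      (fun hcon => Fin.succ_ne_zero j (hg hcon)) (by rw [hsig, hsig])
    rwa [hsig] at h
  · apply linearIndependent_of_eval _ (fun j : Fin c => Sum.inr (g j.succ, 0))
    intro j j'
    simp only [Pi.sub_apply, uVec]
    rw [if_neg (show ¬ g j'.succ = g 0 from fun hcon => Fin.succ_ne_zero j' (hg hcon))]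
    by_cases hj : j' = j
    · subst hj; simp
    · rw [if_neg (show ¬ g j'.succ = g j.succ from fun hcon => hj (Fin.succ_inj.mp (hg hcon))),
        if_neg (show ¬ j = j' from fun hcon => hj hcon.symm)]
      ring

/-- For the `r`-regular star block graph with `k` blocks (`l` negative, `k - l`
positive), `1` is an eigenvalue of `A(G)` with multiplicity at least `(r-2)(l-1)`,
`2-r` with multiplicity at least `l-1`, `-1` with multiplicity at least
`(r-2)(k-l-1)`, and `r-2` with multiplicity at least `k-l-1`. -/
theorem stmt_19 (k l r : ℕ) (hk : 1 ≤ k) (hl : l ≤ k) (hr : 2 ≤ r) :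
    (r - 2) * (l - 1) ≤ (starBlockAdj k l r).charpoly.rootMultiplicity 1 ∧
    l - 1 ≤ (starBlockAdj k l r).charpoly.rootMultiplicity (2 - (r : ℝ)) ∧
    (r - 2) * (k - l - 1) ≤ (starBlockAdj k l r).charpoly.rootMultiplicity (-1) ∧
    k - l - 1 ≤ (starBlockAdj k l r).charpoly.rootMultiplicity ((r : ℝ) - 2) := by
  obtain ⟨m, rfl⟩ : ∃ m, r = m + 2 := ⟨r - 2, by omega⟩
  refine ⟨?_, ?_, ?_, ?_⟩
  · -- eigenvalue 1
    have hsig : ∀ i : Fin l, blockSign k l (Fin.castLE hl i) = -1 := by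
      intro i
      simp only [blockSign, Fin.coe_castLE]
      rw [if_pos i.isLt]
    have h := fam_sumzero k l m (Fin.castLE hl) (Fin.castLE_injective hl) (-1) hsig
    rw [neg_neg] at h
    refine le_trans ?_ h
    have hm : m + 2 - 2 = m := by omega
    rw [hm]
    exact le_trans (Nat.mul_le_mul_left m (Nat.sub_le l 1)) (le_of_eq (Nat.mul_comm m l))
  · -- eigenvalue 2 - r
    rcases Nat.eq_zero_or_pos l with h0 | h0
    · subst h0; simp
    · obtain ⟨t, rfl⟩ : ∃ t, l = t + 1 := ⟨l - 1, by omega⟩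
      have hsig : ∀ i : Fin (t+1), blockSign k (t+1) (Fin.castLE hl i) = -1 := by
        intro i
        simp only [blockSign, Fin.coe_castLE]
        rw [if_pos i.isLt]
      have h := fam_diff k (t+1) m (Fin.castLE hl) (Fin.castLE_injective hl) (-1) hsig
      have hc : (2 : ℝ) - ((m + 2 : ℕ) : ℝ) = (-1) * (m : ℝ) := by push_cast; ring
      rw [hc]
      exact h
  · -- eigenvalue -1
    set g : Fin (k - l) → Fin k := fun i => ⟨l + (i : ℕ), by have := i.isLt; omega⟩ with hg
    have hginj : Function.Injective g := by
      intro a b hab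
      have : l + (a : ℕ) = l + (b : ℕ) := congrArg Fin.val hab
      exact Fin.ext (by omega)
    have hsig : ∀ i, blockSign k l (g i) = 1 := by
      intro i
      simp only [blockSign, hg]
      rw [if_neg (by omega)]
    have h := fam_sumzero k l m g hginj 1 hsig
    rw [show -(1:ℝ) = -1 from rfl] at h
    refine le_trans ?_ h
    have hm : m + 2 - 2 = m := by omega
    rw [hm]
    exact le_trans (Nat.mul_le_mul_left m (Nat.sub_le (k-l) 1)) (le_of_eq (Nat.mul_comm m (k-l)))
  · -- eigenvalue r - 2
    rcases Nat.eq_zero_or_pos (k - l) with h0 | h0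
    · rw [h0]; simp
    · obtain ⟨u, hu⟩ : ∃ u, k - l = u + 1 := ⟨k - l - 1, by omega⟩
      set g : Fin (u + 1) → Fin k := fun i => ⟨l + (i : ℕ), by have := i.isLt; omega⟩ with hg
      have hginj : Function.Injective g := by
        intro a b hab
        have : l + (a : ℕ) = l + (b : ℕ) := congrArg Fin.val hab
        exact Fin.ext (by omega)
      have hsig : ∀ i, blockSign k l (g i) = 1 := by
        intro i
        simp only [blockSign, hg]
        rw [if_neg (by omega)]
      have h := fam_diff k l m g hginj 1 hsig
      have hc : ((m + 2 : ℕ) : ℝ) - 2 = 1 * (m : ℝ) := by push_cast; ring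
      rw [hc, show k - l - 1 = u from by omega]
      exact h
end
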